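/- Let r ≥ 1 be an integer, K an r-conic simplicial complex, M a simplicial complex and φ: M → K a simplicial map. If M̃ is obtained from M by an r-starring, then there exist a homeomorphism h: |M̃| → |M| and a simplicial map φ̃: M̃ → K such that |φ| ∘ h is homotopic to |φ̃|. In particular, |φ| is null-homotopic if and only if |φ̃| is null-homotopic. -/

import Mathlib

open Finset
open scoped Classical

/-- An abstract simplicial complex on vertex type `V`: a downward-closed family of
nonempty finite subsets of `V`. -/
structure SComplex (V : Type*) where
  faces : Set (Finset V)
  not_empty_mem : ∅ ∉ faces
  down_closed : ∀ {s t : Finset V}, s ∈ faces → t ⊆ s → t.Nonempty → t ∈ faces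

namespace SComplex

variable {V W : Type*}

/-- The vertex set of a simplicial complex. -/
def vertexSet (K : SComplex V) : Set V := {v | {v} ∈ K.faces}

/-- The geometric realization of a simplicial complex, as the set of convex-combination
coordinate functions supported on a simplex. -/
def realization (K : SComplex V) : Set (V → ℝ) :=
  {x | ∃ σ ∈ K.faces, (∀ v, 0 ≤ x v) ∧ (∀ v, v ∉ σ → x v = 0) ∧ (∑ v ∈ σ, x v) = 1}

/-- The geometric realization as a topological space. -/
abbrev space (K : SComplex V) : Type _ := ↥(K.realization)

/-- `L` is a subcomplex of `K`. -/
def IsSubcomplex (L K : SComplex V) : Prop := L.faces ⊆ K.faces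

/-- A complex is `r`-conic (`r` an integer, possibly `-1`) if every subcomplex with at
most `r` vertices is contained in the closed star of some vertex. -/
def IsConic (K : SComplex V) (r : ℤ) : Prop :=
  ∀ L : SComplex V, L.IsSubcomplex K → L.vertexSet.Finite →
    (L.vertexSet.ncard : ℤ) ≤ r →
    ∃ v ∈ K.vertexSet, ∀ σ ∈ L.faces, insert v σ ∈ K.faces

/-- The link of a vertex `v` in `K`. -/
def vertexLink (K : SComplex V) (v : V) : Set (Finset V) :=
  {τ ∈ K.faces | v ∉ τ ∧ insert v τ ∈ K.faces}

/-- A nonempty complex is `r`-ample if for every set `U` of at most `r` vertices and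
every subcomplex `L` with vertices in `U`, some vertex `v` has a link whose simplices
contained in `U` are exactly those of `L`. -/
def IsAmple (K : SComplex V) (r : ℕ) : Prop :=
  K.faces.Nonempty ∧
  ∀ U : Finset V, ↑U ⊆ K.vertexSet → U.card ≤ r →
    ∀ L : SComplex V, L.IsSubcomplex K → L.vertexSet ⊆ ↑U →
      ∃ v ∈ K.vertexSet, {τ ∈ K.vertexLink v | ↑τ ⊆ (U : Set V)} = L.faces

end SComplex

/-- A topological space is `n`-connected if it is nonempty and every continuous map
from the `k`-sphere, `0 ≤ k ≤ n`, is null-homotopic. -/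
def NConnected (n : ℕ) (X : Type*) [TopologicalSpace X] : Prop :=
  Nonempty X ∧ ∀ k : ℕ, k ≤ n →
    ∀ f : C(Metric.sphere (0 : EuclideanSpace ℝ (Fin (k + 1))) 1, X),
      f.Nullhomotopic

namespace SComplex

variable {V W : Type*}

/-- The affine extension of a vertex assignment `φ : W → (V → ℝ)` to barycentric
coordinate functions. -/
noncomputable def affMap (φ : W → V → ℝ) (x : W → ℝ) : V → ℝ :=
  fun v => ∑ᶠ w, x w * φ w v

/-- The closed geometric simplex of `K` spanned by the vertices of `σ`. -/
def geomSimplex (K : SComplex V) (σ : Finset V) : Set (V → ℝ) :=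
  {x ∈ K.realization | ∀ v, v ∉ σ → x v = 0}

/-- `L` is a (geometric) subdivision of `K` via the vertex placement `φ`: the affine
extension of `φ` maps `|L|` bijectively onto `|K|` and maps each closed simplex of `L`
into a closed simplex of `K`. -/
def IsSubdivisionVia (L : SComplex W) (φ : W → V → ℝ) (K : SComplex V) : Prop :=
  Set.BijOn (affMap φ) L.realization K.realization ∧
  ∀ σ ∈ L.faces, ∃ τ ∈ K.faces, affMap φ '' L.geomSimplex σ ⊆ K.geomSimplex τ

/-- `f` realizes a simplicial isomorphism from `K` onto `L`. -/
def IsIsoMap (f : V → W) (K : SComplex V) (L : SComplex W) : Prop :=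
  Set.InjOn f K.vertexSet ∧
  (∀ σ ∈ K.faces, σ.image f ∈ L.faces) ∧
  (∀ τ ∈ L.faces, ∃ σ ∈ K.faces, σ.image f = τ)

/-- Two simplicial complexes are isomorphic. -/
def Iso (K : SComplex V) (L : SComplex W) : Prop :=
  ∃ f : V → W, IsIsoMap f K L

/-- Two simplicial complexes are PL homeomorphic if they admit simplicially isomorphic
subdivisions. -/
def PLHomeo (K : SComplex V) (L : SComplex W) : Prop :=
  ∃ (A B : Type) (K' : SComplex A) (L' : SComplex B)
    (φ : A → V → ℝ) (ψ : B → W → ℝ),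
      IsSubdivisionVia K' φ K ∧ IsSubdivisionVia L' ψ L ∧ Iso K' L'

end SComplex

/-- The standard `n`-simplex as a simplicial complex: all nonempty subsets of
`Fin (n+1)`. -/
def stdSimplexC (n : ℕ) : SComplex (Fin (n + 1)) where
  faces := {σ | σ.Nonempty}
  not_empty_mem := by simp [Set.mem_setOf_eq]
  down_closed := fun _ _ h => h

/-- The boundary of the standard simplex on `Fin j`: all nonempty proper subsets.
For `j = m + 2` this is the combinatorial `m`-sphere `∂Δ^{m+1}`; for `j = 1` it is the
empty complex (the `(-1)`-sphere). -/
def boundaryC (j : ℕ) : SComplex (Fin j) where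
  faces := {σ | σ.Nonempty ∧ σ ≠ Finset.univ}
  not_empty_mem := by
    rintro ⟨h, -⟩; exact Finset.not_nonempty_empty h
  down_closed := by
    rintro s t ⟨-, hs⟩ hts ht
    refine ⟨ht, fun h => hs ?_⟩
    subst h
    exact Finset.univ_subset_iff.mp hts

namespace SComplex

variable {V : Type*}

/-- A combinatorial `d`-ball: a complex PL homeomorphic to the standard `d`-simplex. -/
def IsCombBall (d : ℕ) (K : SComplex V) : Prop := K.PLHomeo (stdSimplexC d)

/-- A complex PL homeomorphic to `∂Δ^{j-1}`, i.e. a combinatorial `(j-2)`-sphere. -/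
def IsCombSphereAux (j : ℕ) (K : SComplex V) : Prop := K.PLHomeo (boundaryC j)

/-- The link of a simplex `σ` in `K`, as a simplicial complex. -/
def linkC (K : SComplex V) (σ : Finset V) : SComplex V where
  faces := {τ | τ ∈ K.faces ∧ (∀ v ∈ σ, v ∉ τ) ∧ τ ∪ σ ∈ K.faces}
  not_empty_mem := fun h => K.not_empty_mem h.1
  down_closed := by
    rintro s t ⟨hs, hdisj, huni⟩ hts ht
    refine ⟨K.down_closed hs hts ht, fun v hv hvt => hdisj v hv (hts hvt), ?_⟩
    refine K.down_closed huni (Finset.union_subset_union_left hts) ?_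
    exact ht.mono Finset.subset_union_left

/-- A combinatorial (PL) `n`-manifold: the link of every simplex `σ` is a combinatorial
sphere of dimension `n - dim σ - 1` (PL homeomorphic to the boundary of the standard
`(n - dim σ)`-simplex). -/
def IsCombManifold (n : ℕ) (M : SComplex V) : Prop :=
  M.faces.Nonempty ∧
  ∀ σ ∈ M.faces, (M.linkC σ).IsCombSphereAux (n + 2 - σ.card)

/-- `(D, bD)` is a triangulated `d`-disk: there is a homeomorphism from `|D|` to the
closed unit `d`-ball carrying `|bD|` exactly onto the boundary sphere. -/
def IsTriangulatedDisk (D bD : SComplex V) (d : ℕ) : Prop :=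
  bD.IsSubcomplex D ∧
  ∃ e : D.space ≃ₜ (Metric.closedBall (0 : EuclideanSpace ℝ (Fin d)) 1),
    ∀ x : D.space, (x : V → ℝ) ∈ bD.realization ↔
      ((e x : EuclideanSpace ℝ (Fin d)) ∈
        Metric.sphere (0 : EuclideanSpace ℝ (Fin d)) 1)

/-- The faces of the cone with apex `w` over the family of faces `F`. -/
def coneFaces (w : V) (F : Set (Finset V)) : Set (Finset V) :=
  F ∪ (insert w '' F) ∪ {{w}}

/-- `Mt` is obtained from `M` by starring the triangulated `d`-disk `D` (with boundary
`bD`) at the new vertex `w`: all simplices of `D` not in `bD` are removed and the cone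
`w ∂D` is attached. -/
def IsStarringAt (r : ℤ) (M Mt : SComplex V) (D bD : SComplex V) (d : ℕ) (w : V) :
    Prop :=
  D.IsSubcomplex M ∧
  D.vertexSet.Finite ∧ (D.vertexSet.ncard : ℤ) ≤ r ∧
  IsTriangulatedDisk D bD d ∧
  (∀ σ ∈ M.faces, ∀ τ ∈ D.faces, τ ∉ bD.faces → τ ⊆ σ → σ ∈ D.faces) ∧
  w ∉ M.vertexSet ∧
  Mt.faces = (M.faces \ {τ | τ ∈ D.faces ∧ τ ∉ bD.faces}) ∪ coneFaces w bD.faces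

/-- `Mt` is obtained from `M` by an `r`-starring. -/
def IsStarring (r : ℤ) (M Mt : SComplex V) : Prop :=
  ∃ (D bD : SComplex V) (d : ℕ) (w : V), IsStarringAt r M Mt D bD d w

/-- `M` `r`-stars to `L`: `L` is obtained from `M` by a finite sequence of
`r`-starrings. -/
def StarsTo (r : ℤ) : SComplex V → SComplex V → Prop :=
  Relation.ReflTransGen (IsStarring r)

end SComplex

/-- A simplicial map between simplicial complexes. -/
structure SMap {V W : Type*} (M : SComplex V) (K : SComplex W) where
  toFun : V → W
  map_faces : ∀ σ ∈ M.faces, σ.image toFun ∈ K.faces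

/-- The geometric realization of a vertex map: push barycentric coordinates forward,
summing the coordinates over each fiber. -/
noncomputable def pushforward {V W : Type*} (f : V → W) (x : V → ℝ) : W → ℝ :=
  fun w => ∑ᶠ v ∈ f ⁻¹' {w}, x v

/-- Two (ambient-valued) maps into the realization of `K` are homotopic through `|K|`:
there is a continuous homotopy with values in `|K|` whose underlying endpoint functions
are `f` and `g`. -/
def AmbientHomotopic {X : Type*} [TopologicalSpace X] {W : Type*} (K : SComplex W)
    (f g : X → (W → ℝ)) : Prop :=
  ∃ H : C(X × unitInterval, K.space),
    (∀ x, ((H (x, 0) : K.space) : W → ℝ) = f x) ∧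
    (∀ x, ((H (x, 1) : K.space) : W → ℝ) = g x)

/-- An (ambient-valued) map into `|K|` is null-homotopic through `|K|`. -/
def AmbientNullhomotopic {X : Type*} [TopologicalSpace X] {W : Type*} (K : SComplex W)
    (f : X → (W → ℝ)) : Prop :=
  ∃ c : K.space, AmbientHomotopic K f (fun _ => ((c : W → ℝ)))
section Generic
open Finset
variable {V W : Type*}

namespace SComplex

lemma coord_nonneg {K : SComplex V} {x : V → ℝ} (hx : x ∈ K.realization) (v : V) : 0 ≤ x v := by
  obtain ⟨σ, -, h1, -, -⟩ := hx; exact h1 v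

lemma coord_le_one {K : SComplex V} {x : V → ℝ} (hx : x ∈ K.realization) (v : V) : x v ≤ 1 := by
  obtain ⟨σ, -, h1, h2, h3⟩ := hx
  by_cases hv : v ∈ σ
  · calc x v ≤ ∑ u ∈ σ, x u := Finset.single_le_sum (fun u _ => h1 u) hv
    _ = 1 := h3
  · simp [h2 v hv]

/-- sums over two supersets of the support agree -/
lemma sum_congr_supp {x : V → ℝ} {σ τ : Finset V}
    (hσ : ∀ v, x v ≠ 0 → v ∈ σ) (hτ : ∀ v, x v ≠ 0 → v ∈ τ) :
    ∑ v ∈ σ, x v = ∑ v ∈ τ, x v := by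
  rw [show σ = σ by rfl]
  have h1 : ∑ v ∈ σ, x v = ∑ v ∈ σ ∪ τ, x v :=
    Finset.sum_subset Finset.subset_union_left (by
      intro v _ hv; by_contra h; exact hv (hσ v h))
  have h2 : ∑ v ∈ τ, x v = ∑ v ∈ σ ∪ τ, x v :=
    Finset.sum_subset Finset.subset_union_right (by
      intro v _ hv; by_contra h; exact hv (hτ v h))
  rw [h1, h2]

/-- a stronger destructor for realization membership: a face that is exactly the support -/
lemma exists_supp_face (K : SComplex V) {x : V → ℝ} (hx : x ∈ K.realization) :
    ∃ σ ∈ K.faces, (∀ v, x v ≠ 0 ↔ v ∈ σ) ∧ (∑ v ∈ σ, x v) = 1 := by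
  obtain ⟨σ, hσ, h1, h2, h3⟩ := hx
  refine ⟨σ.filter (fun v => x v ≠ 0), ?_, fun v => ?_, ?_⟩
  · apply K.down_closed hσ (Finset.filter_subset _ _)
    rw [Finset.filter_nonempty_iff]
    by_contra h
    push_neg at h
    have : ∑ v ∈ σ, x v = 0 := Finset.sum_eq_zero (fun v hv => h v hv)
    rw [h3] at this; norm_num at this
  · constructor
    · intro h; exact Finset.mem_filter.2 ⟨by by_contra hv; exact h (h2 v hv), h⟩
    · intro h; exact (Finset.mem_filter.1 h).2
  · rw [← h3]
    exact sum_congr_supp (fun v hv => Finset.mem_filter.2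
      ⟨by by_contra hc; exact hv (h2 v hc), hv⟩) (fun v hv => by by_contra hc; exact hv (h2 v hc))

lemma mem_real_of_supp {K : SComplex V} {x : V → ℝ} {σ : Finset V} (hσ : σ ∈ K.faces)
    (h1 : ∀ v, 0 ≤ x v) (h2 : ∀ v, x v ≠ 0 → v ∈ σ) (h3 : ∑ v ∈ σ, x v = 1) :
    x ∈ K.realization :=
  ⟨σ, hσ, h1, fun v hv => by by_contra h; exact hv (h2 v h), h3⟩

/-- if the support is contained in a face of the complex, any support superset face sums to 1 -/
lemma sum_eq_one_of_supp {K : SComplex V} {x : V → ℝ} {σ : Finset V}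
    (hx : x ∈ K.realization) (h2 : ∀ v, x v ≠ 0 → v ∈ σ) :
    ∑ v ∈ σ, x v = 1 := by
  obtain ⟨τ, -, -, hz, hs⟩ := hx
  rw [sum_congr_supp h2 (fun v hv => by by_contra h; exact hv (hz v h))]
  exact hs

lemma supp_face_of_real {K : SComplex V} {x : V → ℝ} (hx : x ∈ K.realization)
    {s : Finset V} (hs : ∀ v, x v ≠ 0 ↔ v ∈ s) : s ∈ K.faces := by
  obtain ⟨σ, hσ, hiff, hsum⟩ := exists_supp_face K hx
  have : s = σ := by ext v; rw [← hs v, hiff v]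
  rw [this]; exact hσ

lemma real_mono {K L : SComplex V} (h : K.IsSubcomplex L) : K.realization ⊆ L.realization := by
  rintro x ⟨σ, hσ, h1, h2, h3⟩; exact ⟨σ, h hσ, h1, h2, h3⟩

lemma vertex_of_mem_face {K : SComplex V} {σ : Finset V} (hσ : σ ∈ K.faces) {v : V}
    (hv : v ∈ σ) : v ∈ K.vertexSet :=
  K.down_closed hσ (Finset.singleton_subset_iff.2 hv) (Finset.singleton_nonempty v)

lemma coord_eq_zero_of_not_vertex {K : SComplex V} {x : V → ℝ} (hx : x ∈ K.realization)
    {w : V} (hw : w ∉ K.vertexSet) : x w = 0 := by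
  obtain ⟨σ, hσ, -, h2, -⟩ := hx
  by_contra h
  have : w ∈ σ := by by_contra hc; exact h (h2 w hc)
  exact hw (vertex_of_mem_face hσ this)

lemma faces_finite {K : SComplex V} (hfin : K.vertexSet.Finite) : K.faces.Finite := by
  apply Set.Finite.subset (hfin.toFinset.powerset : Finset (Finset V)).finite_toSet
  intro σ hσ
  simp only [Finset.coe_powerset, Set.mem_preimage, Set.mem_powerset_iff,
    Finset.coe_subset, Finset.mem_coe, Finset.mem_powerset]
  intro v hv
  simp only [Set.Finite.mem_toFinset]
  exact vertex_of_mem_face hσ hv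

lemma isClosed_realization {K : SComplex V} (hfin : K.vertexSet.Finite) :
    IsClosed K.realization := by
  have : K.realization = ⋃ σ ∈ K.faces,
      {x : V → ℝ | (∀ v, 0 ≤ x v) ∧ (∀ v, v ∉ σ → x v = 0) ∧ (∑ v ∈ σ, x v) = 1} := by
    ext x; simp only [Set.mem_iUnion, Set.mem_setOf_eq, realization]; tauto
  rw [this]
  apply Set.Finite.isClosed_biUnion (faces_finite hfin)
  intro σ _
  have h1 : IsClosed {x : V → ℝ | ∀ v, 0 ≤ x v} := by
    have : {x : V → ℝ | ∀ v, 0 ≤ x v} = ⋂ v, {x : V → ℝ | 0 ≤ x v} := by ext; simp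
    rw [this]
    exact isClosed_iInter (fun v => isClosed_le continuous_const (continuous_apply v))
  have h2 : IsClosed {x : V → ℝ | ∀ v, v ∉ σ → x v = 0} := by
    have : {x : V → ℝ | ∀ v, v ∉ σ → x v = 0} = ⋂ (v) (_ : v ∉ σ), {x : V → ℝ | x v = 0} := by
      ext; simp
    rw [this]
    exact isClosed_iInter fun v => isClosed_iInter fun _ =>
      isClosed_eq (continuous_apply v) continuous_const
  have h3 : IsClosed {x : V → ℝ | (∑ v ∈ σ, x v) = 1} :=
    isClosed_eq (by exact continuous_finset_sum σ (fun v _ => continuous_apply v)) continuous_const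
  have heq : {x : V → ℝ | (∀ v, 0 ≤ x v) ∧ (∀ v, v ∉ σ → x v = 0) ∧ (∑ v ∈ σ, x v) = 1}
      = {x : V → ℝ | ∀ v, 0 ≤ x v} ∩ ({x | ∀ v, v ∉ σ → x v = 0} ∩ {x | (∑ v ∈ σ, x v) = 1}) := by
    ext x; simp only [Set.mem_inter_iff, Set.mem_setOf_eq, and_assoc]
  rw [heq]; exact h1.inter (h2.inter h3)

end SComplex
end Generic
section Generic2
open Finset
variable {V W : Type*}

lemma pushforward_eq_sum {f : V → W} {x : V → ℝ} {σ : Finset V}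
    (h : ∀ v, x v ≠ 0 → v ∈ σ) (w' : W) :
    pushforward f x w' = ∑ v ∈ σ.filter (fun v => f v = w'), x v := by
  apply finsum_mem_eq_sum_of_inter_support_eq
  ext v
  simp only [Set.mem_inter_iff, Set.mem_preimage, Set.mem_singleton_iff,
    Function.mem_support, Finset.coe_filter, Set.mem_setOf_eq, Finset.mem_coe,
    Finset.mem_filter]
  constructor
  · rintro ⟨h1, h2⟩; exact ⟨⟨h v h2, h1⟩, h2⟩
  · rintro ⟨⟨-, h1⟩, h2⟩; exact ⟨h1, h2⟩

lemma pushforward_nonneg {f : V → W} {x : V → ℝ} {σ : Finset V}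
    (h : ∀ v, x v ≠ 0 → v ∈ σ) (hn : ∀ v, 0 ≤ x v) (w' : W) :
    0 ≤ pushforward f x w' := by
  rw [pushforward_eq_sum h w']
  exact Finset.sum_nonneg (fun v _ => hn v)

lemma pushforward_supp {f : V → W} {x : V → ℝ} {σ : Finset V}
    (h : ∀ v, x v ≠ 0 → v ∈ σ) (w' : W) (hw' : w' ∉ σ.image f) :
    pushforward f x w' = 0 := by
  rw [pushforward_eq_sum h w']
  apply Finset.sum_eq_zero
  intro v hv
  rw [Finset.mem_filter] at hv
  exact absurd (Finset.mem_image.2 ⟨v, hv.1, hv.2⟩) hw'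

lemma pushforward_sum_image {f : V → W} {x : V → ℝ} {σ : Finset V}
    (h : ∀ v, x v ≠ 0 → v ∈ σ) :
    ∑ w' ∈ σ.image f, pushforward f x w' = ∑ v ∈ σ, x v := by
  have : ∀ w' ∈ σ.image f, pushforward f x w' = ∑ v ∈ σ.filter (fun v => f v = w'), x v :=
    fun w' _ => pushforward_eq_sum h w'
  rw [Finset.sum_congr rfl this]
  rw [Finset.sum_fiberwise_eq_sum_filter σ (σ.image f) f x]
  apply Finset.sum_congr
  · ext v; simp only [Finset.mem_filter, Finset.mem_image]
    exact ⟨fun hv => hv.1, fun hv => ⟨hv, ⟨v, hv, rfl⟩⟩⟩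
  · intros; rfl

/-- pushforward of a realization point lies in the realization of the target complex,
provided images of faces are faces -/
lemma pushforward_mem_real {M : SComplex V} {K : SComplex W} {f : V → W}
    (hf : ∀ σ ∈ M.faces, σ.image f ∈ K.faces) {x : V → ℝ} (hx : x ∈ M.realization) :
    pushforward f x ∈ K.realization := by
  obtain ⟨σ, hσ, hiff, hsum⟩ := M.exists_supp_face hx
  have hsupp : ∀ v, x v ≠ 0 → v ∈ σ := fun v hv => (hiff v).1 hv
  refine ⟨σ.image f, hf σ hσ, ?_, ?_, ?_⟩
  · exact pushforward_nonneg hsupp (M.coord_nonneg hx)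
  · intro w' hw'; exact pushforward_supp hsupp w' hw'
  · rw [pushforward_sum_image hsupp, hsum]

lemma pushforward_le_one {M : SComplex V} {f : V → W} {x : V → ℝ}
    (hx : x ∈ M.realization) (w' : W) : pushforward f x w' ≤ 1 := by
  obtain ⟨σ, hσ, hiff, hsum⟩ := M.exists_supp_face hx
  have hsupp : ∀ v, x v ≠ 0 → v ∈ σ := fun v hv => (hiff v).1 hv
  rw [pushforward_eq_sum hsupp w', ← hsum]
  exact Finset.sum_le_sum_of_subset_of_nonneg (Finset.filter_subset _ _)
    (fun v _ _ => M.coord_nonneg hx v)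

/-- gluing continuity on a closed cover -/
lemma continuous_of_closed_cover {X Y : Type*} [TopologicalSpace X] [TopologicalSpace Y]
    {f : X → Y} {s t : Set X} (hs : IsClosed s) (ht : IsClosed t)
    (hst : s ∪ t = Set.univ) (hfs : ContinuousOn f s) (hft : ContinuousOn f t) :
    Continuous f := by
  rw [continuous_iff_isClosed]
  intro C hC
  have : f ⁻¹' C = (s ∩ f ⁻¹' C) ∪ (t ∩ f ⁻¹' C) := by
    ext x
    simp only [Set.mem_union, Set.mem_inter_iff, Set.mem_preimage]
    constructor
    · intro hx
      have : x ∈ s ∪ t := hst ▸ Set.mem_univ x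
      rcases this with h | h
      · exact Or.inl ⟨h, hx⟩
      · exact Or.inr ⟨h, hx⟩
    · rintro (⟨-, h⟩ | ⟨-, h⟩) <;> exact h
  rw [this]
  exact (hfs.preimage_isClosed_of_isClosed hs hC).union
    (hft.preimage_isClosed_of_isClosed ht hC)

/-- key continuity: each coordinate of the pushforward is continuous on a realization -/
lemma pushforward_coord_continuous (M : SComplex V) (f : V → W) (w' : W) :
    Continuous fun x : M.space => pushforward f ((x : M.space) : V → ℝ) w' := by
  rw [continuous_iff_continuousAt]
  intro x₀
  obtain ⟨S, hS, hiff, hsum⟩ := M.exists_supp_face x₀.2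
  -- lower and upper bounds
  set l : M.space → ℝ := fun x => ∑ v ∈ S.filter (fun v => f v = w'), (x : V → ℝ) v with hl
  set g : M.space → ℝ := fun x => l x + (1 - ∑ v ∈ S, (x : V → ℝ) v) with hg
  have hlcont : Continuous l := by
    apply continuous_finset_sum
    intro v _
    exact (continuous_apply v).comp continuous_subtype_val
  have hgcont : Continuous g := by
    apply hlcont.add
    exact continuous_const.sub (continuous_finset_sum _ (fun v _ =>
      (continuous_apply v).comp continuous_subtype_val))
  have hbound : ∀ x : M.space, l x ≤ pushforward f (x : V → ℝ) w'
      ∧ pushforward f (x : V → ℝ) w' ≤ g x := by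
    intro x
    obtain ⟨σx, hσx, hiffx, hsumx⟩ := M.exists_supp_face x.2
    have hsupp : ∀ v, (x : V → ℝ) v ≠ 0 → v ∈ S ∪ σx :=
      fun v hv => Finset.mem_union_right _ ((hiffx v).1 hv)
    have hnn : ∀ v, 0 ≤ (x : V → ℝ) v := M.coord_nonneg x.2
    rw [pushforward_eq_sum hsupp w']
    constructor
    · -- lower bound
      apply Finset.sum_le_sum_of_subset_of_nonneg
      · exact Finset.filter_subset_filter _ Finset.subset_union_left
      · exact fun v _ _ => hnn v
    · -- upper bound
      have hsplit : (S ∪ σx).filter (fun v => f v = w')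
          ⊆ S.filter (fun v => f v = w') ∪ ((S ∪ σx) \ S) := by
        intro v hv
        rw [Finset.mem_filter] at hv
        rcases Finset.mem_union.1 hv.1 with h | h
        · exact Finset.mem_union_left _ (Finset.mem_filter.2 ⟨h, hv.2⟩)
        · by_cases hvS : v ∈ S
          · exact Finset.mem_union_left _ (Finset.mem_filter.2 ⟨hvS, hv.2⟩)
          · exact Finset.mem_union_right _ (Finset.mem_sdiff.2 ⟨hv.1, hvS⟩)
      calc ∑ v ∈ (S ∪ σx).filter (fun v => f v = w'), (x : V → ℝ) v
          ≤ ∑ v ∈ S.filter (fun v => f v = w') ∪ ((S ∪ σx) \ S), (x : V → ℝ) v :=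
            Finset.sum_le_sum_of_subset_of_nonneg hsplit (fun v _ _ => hnn v)
        _ = ∑ v ∈ S.filter (fun v => f v = w'), (x : V → ℝ) v
              + ∑ v ∈ (S ∪ σx) \ S, (x : V → ℝ) v := by
            apply Finset.sum_union
            exact Finset.disjoint_left.2 (fun v hv hv2 =>
              (Finset.mem_sdiff.1 hv2).2 (Finset.mem_filter.1 hv).1)
        _ = l x + (∑ v ∈ S ∪ σx, (x : V → ℝ) v - ∑ v ∈ S, (x : V → ℝ) v) := by
            congr 1
            rw [eq_sub_iff_add_eq]
            rw [Finset.sum_sdiff_eq_sub Finset.subset_union_left]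
            ring
        _ = g x := by
            rw [hg]
            congr 1
            have : ∑ v ∈ S ∪ σx, (x : V → ℝ) v = 1 :=
              M.sum_eq_one_of_supp x.2 hsupp
            rw [this]
  have hlim_l : Filter.Tendsto l (nhds x₀) (nhds (pushforward f (x₀ : V → ℝ) w')) := by
    have : pushforward f (x₀ : V → ℝ) w' = l x₀ := by
      rw [hl]
      exact pushforward_eq_sum (fun v hv => (hiff v).1 hv) w'
    rw [this]
    exact hlcont.continuousAt
  have hlim_g : Filter.Tendsto g (nhds x₀) (nhds (pushforward f (x₀ : V → ℝ) w')) := by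
    have : pushforward f (x₀ : V → ℝ) w' = g x₀ := by
      rw [hg, hl]
      simp only []
      rw [hsum]
      have : pushforward f (x₀ : V → ℝ) w'
          = ∑ v ∈ S.filter (fun v => f v = w'), (x₀ : V → ℝ) v :=
        pushforward_eq_sum (fun v hv => (hiff v).1 hv) w'
      rw [this]; ring
    rw [this]
    exact hgcont.continuousAt
  exact tendsto_of_tendsto_of_tendsto_of_le_of_le hlim_l hlim_g
    (fun x => (hbound x).1) (fun x => (hbound x).2)

end Generic2
section Generic3
variable {W : Type*} {X X' : Type*} [TopologicalSpace X] [TopologicalSpace X']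
variable {K : SComplex W}

lemma AmbientHomotopic.symm {f g : X → (W → ℝ)} (h : AmbientHomotopic K f g) :
    AmbientHomotopic K g f := by
  obtain ⟨H, h0, h1⟩ := h
  refine ⟨⟨fun p => H (p.1, unitInterval.symm p.2), ?_⟩, ?_, ?_⟩
  · exact H.continuous.comp (by continuity)
  · intro x; simpa using h1 x
  · intro x; simpa using h0 x

lemma AmbientHomotopic.trans {f g k : X → (W → ℝ)} (h1 : AmbientHomotopic K f g)
    (h2 : AmbientHomotopic K g k) : AmbientHomotopic K f k := by
  classical
  obtain ⟨H1, h10, h11⟩ := h1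
  obtain ⟨H2, h20, h21⟩ := h2
  set T : X × unitInterval → K.space := fun p =>
    if (p.2 : ℝ) ≤ 1/2 then H1 (p.1, Set.projIcc 0 1 zero_le_one (2 * (p.2 : ℝ)))
    else H2 (p.1, Set.projIcc 0 1 zero_le_one (2 * (p.2 : ℝ) - 1)) with hT
  have hcont : Continuous T := by
    rw [hT]
    apply Continuous.if_le
    · exact H1.continuous.comp (continuous_fst.prodMk
        ((continuous_projIcc.comp (continuous_const.mul
          (continuous_subtype_val.comp continuous_snd)))))
    · exact H2.continuous.comp (continuous_fst.prodMk
        ((continuous_projIcc.comp ((continuous_const.mul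
          (continuous_subtype_val.comp continuous_snd)).sub continuous_const))))
    · exact continuous_subtype_val.comp continuous_snd
    · exact continuous_const
    · intro p hp
      have h2v : (2 : ℝ) * (p.2 : ℝ) = 1 := by rw [hp]; norm_num
      have e1 : Set.projIcc (0:ℝ) 1 zero_le_one (2 * (p.2 : ℝ)) = 1 := by
        rw [h2v]; simp [Set.projIcc]
      have e2 : Set.projIcc (0:ℝ) 1 zero_le_one (2 * (p.2 : ℝ) - 1) = 0 := by
        rw [h2v]; simp [Set.projIcc]
      rw [e1, e2]
      apply Subtype.ext
      rw [h11 p.1, h20 p.1]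
  refine ⟨⟨T, hcont⟩, ?_, ?_⟩
  · intro x
    have : ((0 : unitInterval) : ℝ) ≤ 1/2 := by norm_num
    simp only [ContinuousMap.coe_mk, hT, this, if_pos]
    have e1 : Set.projIcc (0:ℝ) 1 zero_le_one (2 * ((0 : unitInterval) : ℝ)) = 0 := by
      norm_num
    rw [e1]; exact h10 x
  · intro x
    have hn : ¬ (((1 : unitInterval) : ℝ) ≤ 1/2) := by norm_num
    simp only [ContinuousMap.coe_mk, hT, hn, if_neg, if_false]
    have e2 : Set.projIcc (0:ℝ) 1 zero_le_one (2 * ((1 : unitInterval) : ℝ) - 1) = 1 := by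
      norm_num
    rw [e2]; exact h21 x

lemma AmbientHomotopic.precomp {f g : X → (W → ℝ)} (h : AmbientHomotopic K f g)
    {c : X' → X} (hc : Continuous c) :
    AmbientHomotopic K (f ∘ c) (g ∘ c) := by
  obtain ⟨H, h0, h1⟩ := h
  exact ⟨⟨fun p => H (c p.1, p.2), H.continuous.comp ((hc.comp continuous_fst).prodMk
    continuous_snd)⟩, fun x => h0 (c x), fun x => h1 (c x)⟩

lemma AmbientNullhomotopic.of_homotopic {f g : X → (W → ℝ)}
    (hfg : AmbientHomotopic K f g) (hf : AmbientNullhomotopic K f) :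
    AmbientNullhomotopic K g := by
  obtain ⟨c, hc⟩ := hf
  exact ⟨c, hfg.symm.trans hc⟩

end Generic3
section StarComb
open Finset SComplex
variable {V : Type*}

/-- the delta function at `w` -/
noncomputable def dwf (w : V) : V → ℝ := fun v => if v = w then 1 else 0

/-- radial coordinate map: strip the `w`-coordinate and renormalize -/
noncomputable def zf (w : V) (x : V → ℝ) : V → ℝ :=
  fun v => if v = w then 0 else x v / (1 - x w)

namespace SComplex

variable {M Mt D bD : SComplex V} {w : V}

lemma w_not_mem_Mface (hw : w ∉ M.vertexSet) {σ : Finset V} (hσ : σ ∈ M.faces) : w ∉ σ :=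
  fun h => hw (vertex_of_mem_face hσ h)

lemma mem_Mt_faces_iff
    (hMt : Mt.faces = (M.faces \ {τ | τ ∈ D.faces ∧ τ ∉ bD.faces}) ∪ coneFaces w bD.faces)
    {σ : Finset V} :
    σ ∈ Mt.faces ↔ ((σ ∈ M.faces ∧ ¬(σ ∈ D.faces ∧ σ ∉ bD.faces))
      ∨ (σ ∈ bD.faces ∨ (∃ τ ∈ bD.faces, σ = insert w τ) ∨ σ = {w})) := by
  rw [hMt]
  simp only [Set.mem_union, Set.mem_diff, Set.mem_setOf_eq, coneFaces,
    Set.mem_image, Set.mem_singleton_iff]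
  constructor
  · rintro ((⟨h1, h2⟩) | ((h | ⟨τ, hτ, rfl⟩) | h))
    · exact Or.inl ⟨h1, h2⟩
    · exact Or.inr (Or.inl h)
    · exact Or.inr (Or.inr (Or.inl ⟨τ, hτ, rfl⟩))
    · exact Or.inr (Or.inr (Or.inr h))
  · rintro ((⟨h1, h2⟩) | (h | ⟨τ, hτ, rfl⟩ | h))
    · exact Or.inl ⟨h1, h2⟩
    · exact Or.inr (Or.inl (Or.inl h))
    · exact Or.inr (Or.inl (Or.inr ⟨τ, hτ, rfl⟩))
    · exact Or.inr (Or.inr h)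

lemma singleton_w_mem_Mt
    (hMt : Mt.faces = (M.faces \ {τ | τ ∈ D.faces ∧ τ ∉ bD.faces}) ∪ coneFaces w bD.faces) :
    {w} ∈ Mt.faces := by
  rw [mem_Mt_faces_iff hMt]
  exact Or.inr (Or.inr (Or.inr rfl))

lemma insert_w_mem_Mt
    (hMt : Mt.faces = (M.faces \ {τ | τ ∈ D.faces ∧ τ ∉ bD.faces}) ∪ coneFaces w bD.faces)
    {τ : Finset V} (hτ : τ ∈ bD.faces) : insert w τ ∈ Mt.faces := by
  rw [mem_Mt_faces_iff hMt]
  exact Or.inr (Or.inr (Or.inl ⟨τ, hτ, rfl⟩))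

lemma bD_mem_Mt
    (hMt : Mt.faces = (M.faces \ {τ | τ ∈ D.faces ∧ τ ∉ bD.faces}) ∪ coneFaces w bD.faces)
    {τ : Finset V} (hτ : τ ∈ bD.faces) : τ ∈ Mt.faces := by
  rw [mem_Mt_faces_iff hMt]
  exact Or.inr (Or.inl hτ)

lemma w_not_mem_bDface (hDM : D.IsSubcomplex M) (hbD : bD.IsSubcomplex D)
    (hw : w ∉ M.vertexSet) {τ : Finset V} (hτ : τ ∈ bD.faces) : w ∉ τ :=
  w_not_mem_Mface hw (hDM (hbD hτ))

lemma dwf_mem_Mt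
    (hMt : Mt.faces = (M.faces \ {τ | τ ∈ D.faces ∧ τ ∉ bD.faces}) ∪ coneFaces w bD.faces) :
    dwf w ∈ Mt.realization := by
  refine mem_real_of_supp (singleton_w_mem_Mt hMt) ?_ ?_ ?_
  · intro v; unfold dwf; split <;> norm_num
  · intro v hv; unfold dwf at hv
    rcases eq_or_ne v w with h | h
    · simp [h]
    · simp [h] at hv
  · simp [dwf]

/-- a point of `|Mt|` with zero `w`-coordinate lies in `|M|` -/
lemma mem_M_real_of_w_zero (hDM : D.IsSubcomplex M) (hbD : bD.IsSubcomplex D)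
    (hMt : Mt.faces = (M.faces \ {τ | τ ∈ D.faces ∧ τ ∉ bD.faces}) ∪ coneFaces w bD.faces)
    {x : V → ℝ} (hx : x ∈ Mt.realization) (hxw : x w = 0) : x ∈ M.realization := by
  obtain ⟨s, hs, hiff, hsum⟩ := Mt.exists_supp_face hx
  have hws : w ∉ s := fun h => by
    have := (hiff w).2 h; exact this hxw
  rw [mem_Mt_faces_iff hMt] at hs
  have hsM : s ∈ M.faces := by
    rcases hs with ⟨h, -⟩ | h | ⟨τ, hτ, rfl⟩ | h
    · exact h
    · exact hDM (hbD h)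
    · exact absurd (Finset.mem_insert_self w τ) hws
    · rw [h] at hws; exact absurd (Finset.mem_singleton_self w) hws
  exact mem_real_of_supp hsM (Mt.coord_nonneg hx) (fun v hv => (hiff v).1 hv) hsum

/-- a point of `|Mt|` with full `w`-coordinate is the apex -/
lemma apex_eq (hMt : Mt.faces = (M.faces \ {τ | τ ∈ D.faces ∧ τ ∉ bD.faces}) ∪ coneFaces w bD.faces)
    {x : V → ℝ} (hx : x ∈ Mt.realization) (hxw : x w = 1) : x = dwf w := by
  obtain ⟨s, hs, hiff, hsum⟩ := Mt.exists_supp_face hx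
  have hws : w ∈ s := (hiff w).1 (by rw [hxw]; norm_num)
  have hrest : ∀ v ∈ s, v ≠ w → x v = 0 := by
    intro v hv hvw
    have h1 : ∑ u ∈ s.erase w, x u = 0 := by
      have := Finset.add_sum_erase s x hws
      rw [hsum, hxw] at this; linarith
    have h2 : ∀ u ∈ s.erase w, 0 ≤ x u := fun u _ => Mt.coord_nonneg hx u
    have := (Finset.sum_eq_zero_iff_of_nonneg h2).1 h1 v (Finset.mem_erase.2 ⟨hvw, hv⟩)
    exact this
  funext v
  unfold dwf
  rcases eq_or_ne v w with h | h
  · simp [h, hxw]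
  · simp only [h, if_false]
    by_cases hv : v ∈ s
    · exact hrest v hv h
    · by_contra hc; exact hv ((hiff v).1 hc)

/-- cone decomposition of points with `0 < x w < 1` -/
lemma cone_decomp (hDM : D.IsSubcomplex M) (hbD : bD.IsSubcomplex D) (hw : w ∉ M.vertexSet)
    (hMt : Mt.faces = (M.faces \ {τ | τ ∈ D.faces ∧ τ ∉ bD.faces}) ∪ coneFaces w bD.faces)
    {x : V → ℝ} (hx : x ∈ Mt.realization) (h0 : x w ≠ 0) (h1 : x w ≠ 1) :
    ∃ τ ∈ bD.faces, ∀ v, x v ≠ 0 → v ∈ insert w τ := by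
  obtain ⟨s, hs, hiff, hsum⟩ := Mt.exists_supp_face hx
  have hws : w ∈ s := (hiff w).1 h0
  rw [mem_Mt_faces_iff hMt] at hs
  rcases hs with ⟨h, -⟩ | h | ⟨τ, hτ, hst⟩ | h
  · exact absurd hws (w_not_mem_Mface hw h)
  · exact absurd hws (w_not_mem_bDface hDM hbD hw h)
  · exact ⟨τ, hτ, fun v hv => hst ▸ (hiff v).1 hv⟩
  · exfalso
    apply h1
    rw [← hsum, h, Finset.sum_singleton]

/-- a point supported on a cone face with zero `w`-coordinate lies in `|∂D|` -/
lemma bD_real_of_cone_zero (hDM : D.IsSubcomplex M) (hbD : bD.IsSubcomplex D)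
    (hw : w ∉ M.vertexSet)
    {x : V → ℝ} (hx : x ∈ Mt.realization)
    (hcone : ∃ σ ∈ coneFaces w bD.faces, ∀ v, x v ≠ 0 → v ∈ σ) (hxw : x w = 0) :
    x ∈ bD.realization := by
  obtain ⟨s, hs, hiff, hsum⟩ := Mt.exists_supp_face hx
  obtain ⟨σ, hσ, hsupp⟩ := hcone
  have hsne : s.Nonempty := Finset.nonempty_iff_ne_empty.2 (fun h => Mt.not_empty_mem (h ▸ hs))
  have hssub : s ⊆ σ := fun v hv => hsupp v ((hiff v).2 hv)
  have hws : w ∉ s := fun h => ((hiff w).2 h) hxw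
  have hsbD : s ∈ bD.faces := by
    rcases hσ with (hσ | ⟨τ, hτ, rfl⟩) | hσ
    · exact bD.down_closed hσ hssub hsne
    · have : s ⊆ τ := fun v hv => by
        rcases Finset.mem_insert.1 (hssub hv) with h | h
        · exact absurd (h ▸ hv) hws
        · exact h
      exact bD.down_closed hτ this hsne
    · rw [hσ] at hssub
      obtain ⟨v, hv⟩ := hsne
      have := Finset.mem_singleton.1 (hssub hv)
      exact absurd (this ▸ hv) hws
  exact mem_real_of_supp hsbD (Mt.coord_nonneg hx) (fun v hv => (hiff v).1 hv) hsum

/-- the renormalized part of a cone point lies in `|∂D|` -/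
lemma zf_mem_bD (hDM : D.IsSubcomplex M) (hbD : bD.IsSubcomplex D) (hw : w ∉ M.vertexSet)
    (hMt : Mt.faces = (M.faces \ {τ | τ ∈ D.faces ∧ τ ∉ bD.faces}) ∪ coneFaces w bD.faces)
    {x : V → ℝ} (hx : x ∈ Mt.realization) (h0 : x w ≠ 0) (h1 : x w ≠ 1) :
    zf w x ∈ bD.realization := by
  obtain ⟨τ, hτ, hsupp⟩ := cone_decomp hDM hbD hw hMt hx h0 h1
  have hxw1 : x w < 1 := lt_of_le_of_ne (Mt.coord_le_one hx w) h1
  have hpos : (0:ℝ) < 1 - x w := by linarith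
  have hwτ : w ∉ τ := w_not_mem_bDface hDM hbD hw hτ
  have hsum1 : ∑ v ∈ insert w τ, x v = 1 := Mt.sum_eq_one_of_supp hx hsupp
  have hsumτ : ∑ v ∈ τ, x v = 1 - x w := by
    rw [Finset.sum_insert hwτ] at hsum1; linarith
  refine mem_real_of_supp hτ ?_ ?_ ?_
  · intro v; unfold zf
    split
    · exact le_refl 0
    · exact div_nonneg (Mt.coord_nonneg hx v) (le_of_lt hpos)
  · intro v hv
    unfold zf at hv
    rcases eq_or_ne v w with h | h
    · simp [h] at hv
    · simp only [h, if_false] at hv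
      have hxv : x v ≠ 0 := fun hc => hv (by rw [hc]; simp)
      rcases Finset.mem_insert.1 (hsupp v hxv) with hh | hh
      · exact absurd hh h
      · exact hh
  · have : ∀ v ∈ τ, zf w x v = x v / (1 - x w) := by
      intro v hv
      unfold zf
      rw [if_neg (fun h : v = w => hwτ (h ▸ hv))]
    rw [Finset.sum_congr rfl this, ← Finset.sum_div, hsumτ, div_self (ne_of_gt hpos)]

/-- a point of `|M|` not in `|D|` lies in `|Mt|` -/
lemma mem_Mt_real_of_not_D (hDM : D.IsSubcomplex M)
    (hMt : Mt.faces = (M.faces \ {τ | τ ∈ D.faces ∧ τ ∉ bD.faces}) ∪ coneFaces w bD.faces)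
    {x : V → ℝ} (hx : x ∈ M.realization) (hxD : x ∉ D.realization) : x ∈ Mt.realization := by
  obtain ⟨s, hs, hiff, hsum⟩ := M.exists_supp_face hx
  have hsD : s ∉ D.faces := fun h =>
    hxD (mem_real_of_supp h (M.coord_nonneg hx) (fun v hv => (hiff v).1 hv) hsum)
  have : s ∈ Mt.faces := by
    rw [mem_Mt_faces_iff hMt]
    exact Or.inl ⟨hs, fun h => hsD h.1⟩
  exact mem_real_of_supp this (M.coord_nonneg hx) (fun v hv => (hiff v).1 hv) hsum

/-- membership in `|D|` is equivalent to the support being a `D`-face -/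
lemma mem_D_real_iff_supp {x : V → ℝ} (hx : x ∈ M.realization) {s : Finset V}
    (hiff : ∀ v, x v ≠ 0 ↔ v ∈ s) (hsum : ∑ v ∈ s, x v = 1) :
    x ∈ D.realization ↔ s ∈ D.faces := by
  constructor
  · intro h; exact supp_face_of_real h hiff
  · intro h; exact mem_real_of_supp h (M.coord_nonneg hx) (fun v hv => (hiff v).1 hv) hsum

end SComplex
end StarComb
section StarGeom
open SComplex

variable {V : Type*}

lemma zero_not_mem_real (K : SComplex V) : (0 : V → ℝ) ∉ K.realization := by
  rintro ⟨σ, -, -, -, hsum⟩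
  simp only [Pi.zero_apply, Finset.sum_const_zero] at hsum
  norm_num at hsum

lemma inv_norm_smul_mem_closedBall {d : ℕ} (b : EuclideanSpace ℝ (Fin d)) :
    ‖b‖⁻¹ • b ∈ Metric.closedBall (0 : EuclideanSpace ℝ (Fin d)) 1 := by
  rw [Metric.mem_closedBall, dist_zero_right, norm_smul, norm_inv, norm_norm]
  rcases eq_or_ne b 0 with h | h
  · simp [h]
  · rw [inv_mul_cancel₀ (norm_ne_zero_iff.2 h)]

lemma norm_inv_norm_smul_of_ne {d : ℕ} {b : EuclideanSpace ℝ (Fin d)} (hb : b ≠ 0) :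
    ‖‖b‖⁻¹ • b‖ = 1 := by
  rw [norm_smul, norm_inv, norm_norm, inv_mul_cancel₀ (norm_ne_zero_iff.2 hb)]

variable {D : SComplex V} {d : ℕ}

/-- the euclidean image of the radial part, scaled back -/
noncomputable def xiE (e : D.space ≃ₜ (Metric.closedBall (0 : EuclideanSpace ℝ (Fin d)) 1))
    (w : V) (x : V → ℝ) : EuclideanSpace ℝ (Fin d) :=
  if h : zf w x ∈ D.realization ∧ x w < 1 then
    (1 - x w) • ((e ⟨zf w x, h.1⟩ : Metric.closedBall (0 : EuclideanSpace ℝ (Fin d)) 1) :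
      EuclideanSpace ℝ (Fin d))
  else 0

lemma norm_xiE_le (e : D.space ≃ₜ (Metric.closedBall (0 : EuclideanSpace ℝ (Fin d)) 1))
    (w : V) {x : V → ℝ} (h0 : 0 ≤ x w) (h1 : x w ≤ 1) : ‖xiE e w x‖ ≤ 1 - x w := by
  unfold xiE
  split
  · next h =>
    rw [norm_smul]
    have hb : ‖((e ⟨zf w x, h.1⟩ : Metric.closedBall (0 : EuclideanSpace ℝ (Fin d)) 1) :
        EuclideanSpace ℝ (Fin d))‖ ≤ 1 := by
      have := (e ⟨zf w x, h.1⟩).2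
      rwa [Metric.mem_closedBall, dist_zero_right] at this
    calc |1 - x w| * ‖((e ⟨zf w x, h.1⟩ : Metric.closedBall (0 : EuclideanSpace ℝ (Fin d)) 1) :
        EuclideanSpace ℝ (Fin d))‖ ≤ |1 - x w| * 1 := by
          apply mul_le_mul_of_nonneg_left hb (abs_nonneg _)
      _ = 1 - x w := by rw [mul_one, abs_of_nonneg (by linarith)]
  · simp only [norm_zero]; linarith

lemma xiE_mem_closedBall (e : D.space ≃ₜ (Metric.closedBall (0 : EuclideanSpace ℝ (Fin d)) 1))
    (w : V) {x : V → ℝ} (h0 : 0 ≤ x w) (h1 : x w ≤ 1) :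
    xiE e w x ∈ Metric.closedBall (0 : EuclideanSpace ℝ (Fin d)) 1 := by
  rw [Metric.mem_closedBall, dist_zero_right]
  calc ‖xiE e w x‖ ≤ 1 - x w := norm_xiE_le e w h0 h1
    _ ≤ 1 := by linarith

/-- the clamped ball-valued version -/
noncomputable def xiBl (e : D.space ≃ₜ (Metric.closedBall (0 : EuclideanSpace ℝ (Fin d)) 1))
    (w : V) (x : V → ℝ) : Metric.closedBall (0 : EuclideanSpace ℝ (Fin d)) 1 :=
  if h : xiE e w x ∈ Metric.closedBall (0 : EuclideanSpace ℝ (Fin d)) 1 then ⟨xiE e w x, h⟩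
  else ⟨0, Metric.mem_closedBall_self zero_le_one⟩

/-- the forward map on the cone region -/
noncomputable def coneF (e : D.space ≃ₜ (Metric.closedBall (0 : EuclideanSpace ℝ (Fin d)) 1))
    (w : V) (x : V → ℝ) : V → ℝ :=
  ((e.symm (xiBl e w x) : D.space) : V → ℝ)

lemma coneF_mem_D (e : D.space ≃ₜ (Metric.closedBall (0 : EuclideanSpace ℝ (Fin d)) 1))
    (w : V) (x : V → ℝ) : coneF e w x ∈ D.realization :=
  (e.symm (xiBl e w x)).2

/-- the forward homeomorphism, on ambient functions -/
noncomputable def hfun (e : D.space ≃ₜ (Metric.closedBall (0 : EuclideanSpace ℝ (Fin d)) 1))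
    (w : V) (x : V → ℝ) : V → ℝ :=
  if x w = 0 then x else coneF e w x

/-- the euclidean coordinate of a point of `|D|` (junk elsewhere) -/
noncomputable def bmapE (e : D.space ≃ₜ (Metric.closedBall (0 : EuclideanSpace ℝ (Fin d)) 1))
    (x : V → ℝ) : EuclideanSpace ℝ (Fin d) :=
  if h : x ∈ D.realization then
    ((e ⟨x, h⟩ : Metric.closedBall (0 : EuclideanSpace ℝ (Fin d)) 1) : EuclideanSpace ℝ (Fin d))
  else 0

lemma norm_bmapE_le (e : D.space ≃ₜ (Metric.closedBall (0 : EuclideanSpace ℝ (Fin d)) 1))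
    (x : V → ℝ) : ‖bmapE e x‖ ≤ 1 := by
  unfold bmapE
  split
  · next h =>
    have := (e ⟨x, h⟩).2
    rwa [Metric.mem_closedBall, dist_zero_right] at this
  · simp

/-- the inverse map on the `|D|` region -/
noncomputable def cone'F (e : D.space ≃ₜ (Metric.closedBall (0 : EuclideanSpace ℝ (Fin d)) 1))
    (w : V) (x : V → ℝ) : V → ℝ :=
  fun v => (1 - ‖bmapE e x‖) * dwf w v
    + ‖bmapE e x‖ * ((e.symm ⟨‖bmapE e x‖⁻¹ • bmapE e x,
        inv_norm_smul_mem_closedBall _⟩ : D.space) : V → ℝ) v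

/-- the inverse homeomorphism, on ambient functions -/
noncomputable def h'fun (e : D.space ≃ₜ (Metric.closedBall (0 : EuclideanSpace ℝ (Fin d)) 1))
    (w : V) (x : V → ℝ) : V → ℝ :=
  if x ∈ D.realization then cone'F e w x else x

end StarGeom
section StarPointwise
open SComplex

variable {V : Type*} {M Mt D bD : SComplex V} {d : ℕ} {w : V}
variable {e : D.space ≃ₜ (Metric.closedBall (0 : EuclideanSpace ℝ (Fin d)) 1)}

/-- on boundary points with zero `w`-coordinate, `coneF` is the identity -/
lemma coneF_boundary (hbD : bD.IsSubcomplex D) {x : V → ℝ}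
    (hx : x ∈ bD.realization) (hxw : x w = 0) : coneF e w x = x := by
  have hzf : zf w x = x := by
    funext v
    unfold zf
    rcases eq_or_ne v w with h | h
    · simp [h, hxw.symm]
    · simp [h, hxw]
  have hxD : x ∈ D.realization := real_mono hbD hx
  have hcond : zf w x ∈ D.realization ∧ x w < 1 :=
    ⟨by rw [hzf]; exact hxD, by rw [hxw]; norm_num⟩
  have hxiE : xiE e w x = ((e ⟨x, hxD⟩ : Metric.closedBall (0 : EuclideanSpace ℝ (Fin d)) 1) :
      EuclideanSpace ℝ (Fin d)) := by
    unfold xiE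
    rw [dif_pos hcond]
    have : (⟨zf w x, hcond.1⟩ : D.space) = ⟨x, hxD⟩ := Subtype.ext hzf
    rw [this, hxw]
    simp
  have hmem : xiE e w x ∈ Metric.closedBall (0 : EuclideanSpace ℝ (Fin d)) 1 := by
    rw [hxiE]; exact (e ⟨x, hxD⟩).2
  have hxiB : xiBl e w x = e ⟨x, hxD⟩ := by
    unfold xiBl
    rw [dif_pos hmem]
    exact Subtype.ext hxiE
  unfold coneF
  rw [hxiB, Homeomorph.symm_apply_apply]

lemma hfun_mem_M (hDM : D.IsSubcomplex M) (hbD : bD.IsSubcomplex D)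
    (hMt : Mt.faces = (M.faces \ {τ | τ ∈ D.faces ∧ τ ∉ bD.faces}) ∪ coneFaces w bD.faces)
    {x : V → ℝ} (hx : x ∈ Mt.realization) : hfun e w x ∈ M.realization := by
  unfold hfun
  split
  · next h => exact mem_M_real_of_w_zero hDM hbD hMt hx h
  · exact real_mono hDM (coneF_mem_D e w x)

lemma cone'F_boundary (hbD : bD.IsSubcomplex D)
    (hsph : ∀ x : D.space, (x : V → ℝ) ∈ bD.realization ↔
      ((e x : EuclideanSpace ℝ (Fin d)) ∈
        Metric.sphere (0 : EuclideanSpace ℝ (Fin d)) 1))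
    {x : V → ℝ} (hxD : x ∈ D.realization) (hx : x ∈ bD.realization) :
    cone'F e w x = x := by
  have hb : bmapE e x = ((e ⟨x, hxD⟩ : Metric.closedBall (0 : EuclideanSpace ℝ (Fin d)) 1) :
      EuclideanSpace ℝ (Fin d)) := by
    unfold bmapE; rw [dif_pos hxD]
  have hsphere : ‖bmapE e x‖ = 1 := by
    rw [hb]
    have := (hsph ⟨x, hxD⟩).1 hx
    rwa [mem_sphere_iff_norm, sub_zero] at this
  have hsub : (⟨‖bmapE e x‖⁻¹ • bmapE e x, inv_norm_smul_mem_closedBall _⟩ :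
      Metric.closedBall (0 : EuclideanSpace ℝ (Fin d)) 1) = e ⟨x, hxD⟩ := by
    apply Subtype.ext
    show ‖bmapE e x‖⁻¹ • bmapE e x = _
    rw [hsphere, inv_one, one_smul, hb]
  funext v
  unfold cone'F
  rw [hsub, Homeomorph.symm_apply_apply]
  show (1 - ‖bmapE e x‖) * dwf w v + ‖bmapE e x‖ * x v = x v
  rw [hsphere]
  ring

/-- membership of the inverse image in `|Mt|`, interior case -/
lemma cone'F_mem_Mt (hDM : D.IsSubcomplex M) (hbD : bD.IsSubcomplex D) (hw : w ∉ M.vertexSet)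
    (hMt : Mt.faces = (M.faces \ {τ | τ ∈ D.faces ∧ τ ∉ bD.faces}) ∪ coneFaces w bD.faces)
    (hsph : ∀ x : D.space, (x : V → ℝ) ∈ bD.realization ↔
      ((e x : EuclideanSpace ℝ (Fin d)) ∈
        Metric.sphere (0 : EuclideanSpace ℝ (Fin d)) 1))
    {x : V → ℝ} (hxD : x ∈ D.realization) : cone'F e w x ∈ Mt.realization := by
  set b := bmapE e x with hbdef
  set z' : V → ℝ := ((e.symm ⟨‖b‖⁻¹ • b, inv_norm_smul_mem_closedBall _⟩ : D.space) : V → ℝ)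
    with hz'def
  have hz'D : z' ∈ D.realization := (e.symm _).2
  have hz'w : z' w = 0 := coord_eq_zero_of_not_vertex (real_mono hDM hz'D) hw
  have hnorm : ‖b‖ ≤ 1 := norm_bmapE_le e x
  have hval : ∀ v, cone'F e w x v = (1 - ‖b‖) * dwf w v + ‖b‖ * z' v := fun v => rfl
  rcases eq_or_ne b 0 with hb | hb
  · -- apex case
    refine mem_real_of_supp (singleton_w_mem_Mt hMt) ?_ ?_ ?_
    · intro v
      rw [hval v]
      have : (0:ℝ) ≤ dwf w v := by unfold dwf; split <;> norm_num
      have := D.coord_nonneg hz'D v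
      nlinarith [norm_nonneg b]
    · intro v hv
      rw [hval v, hb] at hv
      simp only [norm_zero, sub_zero, one_mul, zero_mul, add_zero] at hv
      unfold dwf at hv
      rcases eq_or_ne v w with h | h
      · simp [h]
      · simp [h] at hv
    · rw [Finset.sum_singleton, hval w, hb]
      simp [dwf]
  · -- general case
    have hz'bD : z' ∈ bD.realization := by
      have h2 := (hsph (e.symm ⟨‖b‖⁻¹ • b, inv_norm_smul_mem_closedBall _⟩)).2
      rw [Homeomorph.apply_symm_apply] at h2
      apply h2
      rw [mem_sphere_iff_norm, sub_zero]
      show ‖‖b‖⁻¹ • b‖ = 1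
      exact norm_inv_norm_smul_of_ne hb
    obtain ⟨τ, hτ, hiff, hsum⟩ := bD.exists_supp_face hz'bD
    have hwτ : w ∉ τ := w_not_mem_bDface hDM hbD hw hτ
    refine mem_real_of_supp (insert_w_mem_Mt hMt hτ) ?_ ?_ ?_
    · intro v
      rw [hval v]
      have : (0:ℝ) ≤ dwf w v := by unfold dwf; split <;> norm_num
      have := D.coord_nonneg hz'D v
      nlinarith [norm_nonneg b]
    · intro v hv
      rw [hval v] at hv
      rcases eq_or_ne v w with h | h
      · exact h ▸ Finset.mem_insert_self w τ
      · apply Finset.mem_insert_of_mem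
        apply (hiff v).1
        intro hc
        apply hv
        unfold dwf
        rw [if_neg h, hc]
        ring
    · rw [Finset.sum_insert hwτ, hval w]
      have h1 : ∀ v ∈ τ, cone'F e w x v = ‖b‖ * z' v := by
        intro v hv
        rw [hval v]
        unfold dwf
        rw [if_neg (fun h : v = w => hwτ (h ▸ hv))]
        ring
      rw [Finset.sum_congr rfl h1, ← Finset.mul_sum, hsum, hz'w]
      unfold dwf
      simp

lemma h'fun_mem_Mt (hDM : D.IsSubcomplex M) (hbD : bD.IsSubcomplex D) (hw : w ∉ M.vertexSet)
    (hMt : Mt.faces = (M.faces \ {τ | τ ∈ D.faces ∧ τ ∉ bD.faces}) ∪ coneFaces w bD.faces)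
    (hsph : ∀ x : D.space, (x : V → ℝ) ∈ bD.realization ↔
      ((e x : EuclideanSpace ℝ (Fin d)) ∈
        Metric.sphere (0 : EuclideanSpace ℝ (Fin d)) 1))
    {x : V → ℝ} (hx : x ∈ M.realization) : h'fun e w x ∈ Mt.realization := by
  unfold h'fun
  split
  · next h => exact cone'F_mem_Mt hDM hbD hw hMt hsph h
  · next h => exact mem_Mt_real_of_not_D hDM hMt hx h

end StarPointwise
section StarInverse
open SComplex

variable {V : Type*} {M Mt D bD : SComplex V} {d : ℕ} {w : V}
variable {e : D.space ≃ₜ (Metric.closedBall (0 : EuclideanSpace ℝ (Fin d)) 1)}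

lemma coneF_eq_of {x : V → ℝ}
    (h : xiE e w x ∈ Metric.closedBall (0 : EuclideanSpace ℝ (Fin d)) 1) :
    coneF e w x = ((e.symm ⟨xiE e w x, h⟩ : D.space) : V → ℝ) := by
  unfold coneF xiBl
  rw [dif_pos h]

lemma xiE_of_not_lt {x : V → ℝ} (h : ¬ x w < 1) : xiE e w x = 0 := by
  unfold xiE
  rw [dif_neg (fun hc => h hc.2)]

lemma bmapE_of_mem {x : V → ℝ} (h : x ∈ D.realization) :
    bmapE e x = ((e ⟨x, h⟩ : Metric.closedBall (0 : EuclideanSpace ℝ (Fin d)) 1) :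
      EuclideanSpace ℝ (Fin d)) := by
  unfold bmapE; rw [dif_pos h]

/-- points of `|Mt|` with zero `w`-coordinate lying in `|D|` lie in `|∂D|` -/
lemma mem_bD_of_Mt_zero (hDM : D.IsSubcomplex M) (hbD : bD.IsSubcomplex D)
    (hw : w ∉ M.vertexSet)
    (hMt : Mt.faces = (M.faces \ {τ | τ ∈ D.faces ∧ τ ∉ bD.faces}) ∪ coneFaces w bD.faces)
    {x : V → ℝ} (hx : x ∈ Mt.realization) (hxw : x w = 0) (hxD : x ∈ D.realization) :
    x ∈ bD.realization := by
  obtain ⟨s, hs, hiff, hsum⟩ := Mt.exists_supp_face hx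
  have hws : w ∉ s := fun h => ((hiff w).2 h) hxw
  have hsD : s ∈ D.faces := supp_face_of_real hxD hiff
  rw [mem_Mt_faces_iff hMt] at hs
  have hsbD : s ∈ bD.faces := by
    rcases hs with ⟨-, hnot⟩ | h | ⟨τ, hτ, rfl⟩ | h
    · by_contra hc; exact hnot ⟨hsD, hc⟩
    · exact h
    · exact absurd (Finset.mem_insert_self w τ) hws
    · rw [h] at hws; exact absurd (Finset.mem_singleton_self w) hws
  exact mem_real_of_supp hsbD (Mt.coord_nonneg hx) (fun v hv => (hiff v).1 hv) hsum

lemma hfun_leftInv (hDM : D.IsSubcomplex M) (hbD : bD.IsSubcomplex D) (hw : w ∉ M.vertexSet)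
    (hMt : Mt.faces = (M.faces \ {τ | τ ∈ D.faces ∧ τ ∉ bD.faces}) ∪ coneFaces w bD.faces)
    (hsph : ∀ x : D.space, (x : V → ℝ) ∈ bD.realization ↔
      ((e x : EuclideanSpace ℝ (Fin d)) ∈
        Metric.sphere (0 : EuclideanSpace ℝ (Fin d)) 1))
    {x : V → ℝ} (hx : x ∈ Mt.realization) : h'fun e w (hfun e w x) = x := by
  rcases eq_or_ne (x w) 0 with hxw | hxw
  · -- boundary / old region: hfun is the identity
    have hh : hfun e w x = x := if_pos hxw
    rw [hh]
    unfold h'fun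
    split
    · next hxD => exact cone'F_boundary hbD hsph hxD (mem_bD_of_Mt_zero hDM hbD hw hMt hx hxw hxD)
    · rfl
  · -- cone region
    have hh : hfun e w x = coneF e w x := if_neg hxw
    rw [hh]
    have hyD : coneF e w x ∈ D.realization := coneF_mem_D e w x
    have hh2 : h'fun e w (coneF e w x) = cone'F e w (coneF e w x) := if_pos hyD
    rw [hh2]
    rcases eq_or_ne (x w) 1 with hx1 | hx1
    · -- apex
      have hxd : x = dwf w := apex_eq hMt hx hx1
      have hxiE : xiE e w x = 0 := xiE_of_not_lt (by rw [hx1]; norm_num)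
      have hmem0 : (0 : EuclideanSpace ℝ (Fin d)) ∈
          Metric.closedBall (0 : EuclideanSpace ℝ (Fin d)) 1 :=
        Metric.mem_closedBall_self zero_le_one
      have hcone : coneF e w x = ((e.symm ⟨0, hmem0⟩ : D.space) : V → ℝ) := by
        rw [coneF_eq_of (by rw [hxiE]; exact hmem0)]
        congr 2
        exact Subtype.ext hxiE
      have hb : bmapE e (coneF e w x) = 0 := by
        rw [bmapE_of_mem hyD]
        have : (⟨coneF e w x, hyD⟩ : D.space) = e.symm ⟨0, hmem0⟩ := Subtype.ext hcone
        rw [this, Homeomorph.apply_symm_apply]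
      have hn : ‖bmapE e (coneF e w x)‖ = 0 := by rw [hb, norm_zero]
      funext v
      unfold cone'F
      have habs : ∀ Q : ℝ, (1 - ‖bmapE e (coneF e w x)‖) * dwf w v
          + ‖bmapE e (coneF e w x)‖ * Q = dwf w v := by
        intro Q; rw [hn]; ring
      rw [habs]
      rw [hxd]
    · -- interior cone point
      have hzf : zf w x ∈ bD.realization := zf_mem_bD hDM hbD hw hMt hx hxw hx1
      have hzfD : zf w x ∈ D.realization := real_mono hbD hzf
      have hxwlt : x w < 1 := lt_of_le_of_ne (Mt.coord_le_one hx w) hx1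
      have hcond : zf w x ∈ D.realization ∧ x w < 1 := ⟨hzfD, hxwlt⟩
      have hxiE : xiE e w x = (1 - x w) • ((e ⟨zf w x, hzfD⟩ :
          Metric.closedBall (0 : EuclideanSpace ℝ (Fin d)) 1) : EuclideanSpace ℝ (Fin d)) := by
        unfold xiE
        rw [dif_pos hcond]
      have hnorm1 : ‖((e ⟨zf w x, hzfD⟩ : Metric.closedBall (0 : EuclideanSpace ℝ (Fin d)) 1) :
          EuclideanSpace ℝ (Fin d))‖ = 1 := by
        have := (hsph ⟨zf w x, hzfD⟩).1 hzf
        rwa [mem_sphere_iff_norm, sub_zero] at this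
      have hxmem : xiE e w x ∈ Metric.closedBall (0 : EuclideanSpace ℝ (Fin d)) 1 :=
        xiE_mem_closedBall e w (Mt.coord_nonneg hx w) (Mt.coord_le_one hx w)
      have hcone : coneF e w x = ((e.symm ⟨xiE e w x, hxmem⟩ : D.space) : V → ℝ) :=
        coneF_eq_of hxmem
      have hb : bmapE e (coneF e w x) = xiE e w x := by
        rw [bmapE_of_mem hyD]
        have : (⟨coneF e w x, hyD⟩ : D.space) = e.symm ⟨xiE e w x, hxmem⟩ := Subtype.ext hcone
        rw [this, Homeomorph.apply_symm_apply]
      have hbnorm : ‖bmapE e (coneF e w x)‖ = 1 - x w := by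
        rw [hb, hxiE, norm_smul, hnorm1, mul_one]
        exact abs_of_nonneg (by linarith)
      have hpos : (0:ℝ) < 1 - x w := by linarith
      have hsub : (⟨‖bmapE e (coneF e w x)‖⁻¹ • bmapE e (coneF e w x),
          inv_norm_smul_mem_closedBall _⟩ :
          Metric.closedBall (0 : EuclideanSpace ℝ (Fin d)) 1) = e ⟨zf w x, hzfD⟩ := by
        apply Subtype.ext
        show ‖bmapE e (coneF e w x)‖⁻¹ • bmapE e (coneF e w x) = _
        rw [hbnorm, hb, hxiE, smul_smul, inv_mul_cancel₀ (ne_of_gt hpos), one_smul]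
      funext v
      unfold cone'F
      rw [hsub, Homeomorph.symm_apply_apply, hbnorm]
      show (1 - (1 - x w)) * dwf w v + (1 - x w) * zf w x v = x v
      unfold dwf zf
      rcases eq_or_ne v w with h | h
      · rw [if_pos h, if_pos h, h]; ring
      · rw [if_neg h, if_neg h, mul_div_cancel₀ _ (ne_of_gt hpos)]
        ring

lemma hfun_rightInv (hDM : D.IsSubcomplex M) (hbD : bD.IsSubcomplex D) (hw : w ∉ M.vertexSet)
    (hMt : Mt.faces = (M.faces \ {τ | τ ∈ D.faces ∧ τ ∉ bD.faces}) ∪ coneFaces w bD.faces)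
    (hsph : ∀ x : D.space, (x : V → ℝ) ∈ bD.realization ↔
      ((e x : EuclideanSpace ℝ (Fin d)) ∈
        Metric.sphere (0 : EuclideanSpace ℝ (Fin d)) 1))
    {x : V → ℝ} (hx : x ∈ M.realization) : hfun e w (h'fun e w x) = x := by
  by_cases hxD : x ∈ D.realization
  · have hh : h'fun e w x = cone'F e w x := if_pos hxD
    rw [hh]
    set b := bmapE e x with hbdef
    have hbval : b = ((e ⟨x, hxD⟩ : Metric.closedBall (0 : EuclideanSpace ℝ (Fin d)) 1) :
        EuclideanSpace ℝ (Fin d)) := bmapE_of_mem hxD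
    set z' : V → ℝ := ((e.symm ⟨‖b‖⁻¹ • b, inv_norm_smul_mem_closedBall _⟩ : D.space) : V → ℝ)
      with hz'def
    have hz'D : z' ∈ D.realization := (e.symm _).2
    have hz'w : z' w = 0 := coord_eq_zero_of_not_vertex (real_mono hDM hz'D) hw
    have hval : ∀ v, cone'F e w x v = (1 - ‖b‖) * dwf w v + ‖b‖ * z' v := fun v => rfl
    have hyw : cone'F e w x w = 1 - ‖b‖ := by
      rw [hval w, hz'w]
      unfold dwf
      simp
    rcases eq_or_ne ‖b‖ 1 with hb1 | hb1
    · -- boundary point of |D|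
      have hz'x : z' = x := by
        have : (⟨‖b‖⁻¹ • b, inv_norm_smul_mem_closedBall _⟩ :
            Metric.closedBall (0 : EuclideanSpace ℝ (Fin d)) 1) = e ⟨x, hxD⟩ := by
          apply Subtype.ext
          show ‖b‖⁻¹ • b = _
          rw [hb1, inv_one, one_smul, hbval]
        rw [hz'def, this, Homeomorph.symm_apply_apply]
      have hy : cone'F e w x = x := by
        funext v
        rw [hval v, hb1, hz'x]
        ring
      rw [hy]
      exact if_pos (by
        have := hyw
        rw [hy, hb1] at this
        rw [this]
        ring)
    · have hblt : ‖b‖ < 1 := lt_of_le_of_ne (norm_bmapE_le e x) hb1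
      rcases eq_or_ne b 0 with hb0 | hb0
      · -- center of |D|
        have hy : cone'F e w x = dwf w := by
          funext v
          rw [hval v, hb0]
          simp
        rw [hy]
        have hdw : dwf w w = 1 := by unfold dwf; simp
        have hne : dwf w w ≠ 0 := by rw [hdw]; norm_num
        have hh2 : hfun e w (dwf w) = coneF e w (dwf w) := if_neg hne
        rw [hh2]
        have hxiE : xiE e w (dwf w) = 0 := xiE_of_not_lt (by rw [hdw]; norm_num)
        have hmem0 : (0 : EuclideanSpace ℝ (Fin d)) ∈
            Metric.closedBall (0 : EuclideanSpace ℝ (Fin d)) 1 :=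
          Metric.mem_closedBall_self zero_le_one
        rw [coneF_eq_of (by rw [hxiE]; exact hmem0)]
        have h1 : (⟨xiE e w (dwf w), by rw [hxiE]; exact hmem0⟩ :
            Metric.closedBall (0 : EuclideanSpace ℝ (Fin d)) 1) = e ⟨x, hxD⟩ := by
          apply Subtype.ext
          show xiE e w (dwf w) = _
          rw [hxiE, ← hbval, hb0]
        rw [h1, Homeomorph.symm_apply_apply]
      · -- interior point of |D|
        have hbnorm_pos : (0:ℝ) < ‖b‖ := norm_pos_iff.2 hb0
        have hywpos : cone'F e w x w ≠ 0 := by rw [hyw]; intro h; linarith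
        have hh2 : hfun e w (cone'F e w x) = coneF e w (cone'F e w x) := if_neg hywpos
        rw [hh2]
        have hzfy : zf w (cone'F e w x) = z' := by
          funext v
          unfold zf
          rcases eq_or_ne v w with h | h
          · rw [if_pos h, h, hz'w]
          · rw [if_neg h, hval v, hyw]
            unfold dwf
            rw [if_neg h]
            rw [mul_zero, zero_add, sub_sub_cancel, mul_div_cancel_left₀ _ hbnorm_pos.ne']
        have hcond : zf w (cone'F e w x) ∈ D.realization ∧ cone'F e w x w < 1 := by
          constructor
          · rw [hzfy]; exact hz'D
          · rw [hyw]; linarith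
        have hxiE : xiE e w (cone'F e w x) = b := by
          unfold xiE
          rw [dif_pos hcond]
          have h2 : (⟨zf w (cone'F e w x), hcond.1⟩ : D.space)
              = e.symm ⟨‖b‖⁻¹ • b, inv_norm_smul_mem_closedBall _⟩ :=
            Subtype.ext (by show zf w (cone'F e w x) = z'; exact hzfy)
          rw [h2, Homeomorph.apply_symm_apply, hyw]
          show (1 - (1 - ‖b‖)) • (‖b‖⁻¹ • b) = b
          rw [smul_smul]
          have : (1 - (1 - ‖b‖)) * ‖b‖⁻¹ = 1 := by
            rw [show 1 - (1 - ‖b‖) = ‖b‖ by ring, mul_inv_cancel₀ (ne_of_gt hbnorm_pos)]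
          rw [this, one_smul]
        have hbmem : b ∈ Metric.closedBall (0 : EuclideanSpace ℝ (Fin d)) 1 := by
          rw [hbval]; exact (e ⟨x, hxD⟩).2
        rw [coneF_eq_of (by rw [hxiE]; exact hbmem)]
        have h3 : (⟨xiE e w (cone'F e w x), by rw [hxiE]; exact hbmem⟩ :
            Metric.closedBall (0 : EuclideanSpace ℝ (Fin d)) 1) = e ⟨x, hxD⟩ := by
          apply Subtype.ext
          show xiE e w (cone'F e w x) = _
          rw [hxiE, hbval]
        rw [h3, Homeomorph.symm_apply_apply]
  · have hh : h'fun e w x = x := if_neg hxD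
    rw [hh]
    exact if_pos (coord_eq_zero_of_not_vertex hx hw)

end StarInverse
section StarContinuity
open SComplex Filter

variable {V : Type*} {M Mt D bD : SComplex V} {d : ℕ} {w : V}
variable {e : D.space ≃ₜ (Metric.closedBall (0 : EuclideanSpace ℝ (Fin d)) 1)}

/-- the cone region inside `|Mt|` -/
def coneRegion (Mt bD : SComplex V) (w : V) : Set Mt.space :=
  {y : Mt.space | ∃ σ ∈ coneFaces w bD.faces, ∀ v, (y : V → ℝ) v ≠ 0 → v ∈ σ}

lemma zf_of_zero {x : V → ℝ} (hxw : x w = 0) : zf w x = x := by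
  funext v
  unfold zf
  rcases eq_or_ne v w with h | h
  · simp [h, hxw.symm]
  · simp [h, hxw]

lemma mem_coneRegion_of_ne {y : Mt.space} (hDM : D.IsSubcomplex M) (hbD : bD.IsSubcomplex D)
    (hw : w ∉ M.vertexSet)
    (hMt : Mt.faces = (M.faces \ {τ | τ ∈ D.faces ∧ τ ∉ bD.faces}) ∪ coneFaces w bD.faces)
    (h0 : (y : V → ℝ) w ≠ 0) : y ∈ coneRegion Mt bD w := by
  rcases eq_or_ne ((y : V → ℝ) w) 1 with h1 | h1
  · refine ⟨{w}, Or.inr rfl, ?_⟩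
    intro v hv
    have := apex_eq hMt y.2 h1
    rw [this] at hv
    unfold dwf at hv
    rcases eq_or_ne v w with h | h
    · simp [h]
    · simp [h] at hv
  · obtain ⟨τ, hτ, hsupp⟩ := cone_decomp hDM hbD hw hMt y.2 h0 h1
    exact ⟨insert w τ, Or.inl (Or.inr ⟨τ, hτ, rfl⟩), hsupp⟩

lemma zf_mem_D_of_cone (hDM : D.IsSubcomplex M) (hbD : bD.IsSubcomplex D)
    (hw : w ∉ M.vertexSet)
    (hMt : Mt.faces = (M.faces \ {τ | τ ∈ D.faces ∧ τ ∉ bD.faces}) ∪ coneFaces w bD.faces)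
    {y : Mt.space} (hy : y ∈ coneRegion Mt bD w) (hlt : (y : V → ℝ) w < 1) :
    zf w (y : V → ℝ) ∈ D.realization := by
  rcases eq_or_ne ((y : V → ℝ) w) 0 with h0 | h0
  · rw [zf_of_zero h0]
    exact real_mono hbD (bD_real_of_cone_zero hDM hbD hw y.2 hy h0)
  · exact real_mono hbD (zf_mem_bD hDM hbD hw hMt y.2 h0 (ne_of_lt hlt))

lemma isClosed_coneRegion
    (hMt : Mt.faces = (M.faces \ {τ | τ ∈ D.faces ∧ τ ∉ bD.faces}) ∪ coneFaces w bD.faces) :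
    IsClosed (coneRegion Mt bD w) := by
  rw [← isOpen_compl_iff, isOpen_iff_forall_mem_open]
  intro y hy
  obtain ⟨s, hs, hiff, hsum⟩ := Mt.exists_supp_face y.2
  refine ⟨{x : Mt.space | ∀ v ∈ s, (x : V → ℝ) v ≠ 0}, ?_, ?_, ?_⟩
  · intro x hx hxB
    apply hy
    obtain ⟨σ, hσ, hsupp⟩ := hxB
    exact ⟨σ, hσ, fun v hv => hsupp v (hx v ((hiff v).1 hv))⟩
  · have : {x : Mt.space | ∀ v ∈ s, (x : V → ℝ) v ≠ 0}
        = ⋂ v ∈ s, {x : Mt.space | (x : V → ℝ) v ≠ 0} := by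
      ext x; simp
    rw [this]
    apply isOpen_biInter_finset
    intro v _
    exact (isOpen_compl_singleton).preimage ((continuous_apply v).comp continuous_subtype_val)
  · intro v hv
    exact (hiff v).2 hv

lemma coneRegion_union (hDM : D.IsSubcomplex M) (hbD : bD.IsSubcomplex D)
    (hw : w ∉ M.vertexSet)
    (hMt : Mt.faces = (M.faces \ {τ | τ ∈ D.faces ∧ τ ∉ bD.faces}) ∪ coneFaces w bD.faces) :
    {y : Mt.space | (y : V → ℝ) w = 0} ∪ coneRegion Mt bD w = Set.univ := by
  ext y
  simp only [Set.mem_union, Set.mem_setOf_eq, Set.mem_univ, iff_true]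
  rcases eq_or_ne ((y : V → ℝ) w) 0 with h | h
  · exact Or.inl h
  · exact Or.inr (mem_coneRegion_of_ne hDM hbD hw hMt h)

lemma xiE_mem_closedBall_Mt (e : D.space ≃ₜ (Metric.closedBall (0 : EuclideanSpace ℝ (Fin d)) 1))
    (y : Mt.space) :
    xiE e w (y : V → ℝ) ∈ Metric.closedBall (0 : EuclideanSpace ℝ (Fin d)) 1 :=
  xiE_mem_closedBall e w (Mt.coord_nonneg y.2 w) (Mt.coord_le_one y.2 w)

/-- continuity of `ξ` on the cone region -/
lemma xiE_contOn (hDM : D.IsSubcomplex M) (hbD : bD.IsSubcomplex D) (hw : w ∉ M.vertexSet)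
    (hMt : Mt.faces = (M.faces \ {τ | τ ∈ D.faces ∧ τ ∉ bD.faces}) ∪ coneFaces w bD.faces) :
    ContinuousOn (fun y : Mt.space => xiE e w (y : V → ℝ)) (coneRegion Mt bD w) := by
  intro y hy
  by_cases h1 : (y : V → ℝ) w < 1
  · -- use the explicit formula on the relatively open set where `x w < 1`
    set O : Set Mt.space := {x : Mt.space | (x : V → ℝ) w < 1} with hO
    have hOopen : IsOpen O :=
      isOpen_lt ((continuous_apply w).comp continuous_subtype_val) continuous_const
    rw [← continuousWithinAt_inter (hOopen.mem_nhds h1)]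
    set S : Set Mt.space := coneRegion Mt bD w ∩ O with hS
    have hmemD : ∀ q : S, zf w ((q : Mt.space) : V → ℝ) ∈ D.realization := fun q =>
      zf_mem_D_of_cone hDM hbD hw hMt q.2.1 q.2.2
    have hzfc : Continuous (fun q : S => zf w ((q : Mt.space) : V → ℝ)) := by
      apply continuous_pi
      intro v
      rcases eq_or_ne v w with h | h
      · have : (fun q : S => zf w ((q : Mt.space) : V → ℝ) v) = fun _ => 0 := by
          funext q; unfold zf; rw [if_pos h]
        rw [this]; exact continuous_const
      · have : (fun q : S => zf w ((q : Mt.space) : V → ℝ) v)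
            = fun q : S => ((q : Mt.space) : V → ℝ) v / (1 - ((q : Mt.space) : V → ℝ) w) := by
          funext q; unfold zf; rw [if_neg h]
        rw [this]
        apply Continuous.div
        · exact (continuous_apply v).comp (continuous_subtype_val.comp continuous_subtype_val)
        · exact continuous_const.sub
            ((continuous_apply w).comp (continuous_subtype_val.comp continuous_subtype_val))
        · intro q
          have := q.2.2
          simp only [hO, Set.mem_setOf_eq] at this
          intro hc; rw [sub_eq_zero] at hc; exact absurd hc.symm (ne_of_lt this)
    have hnice : Continuous (fun q : S => (1 - ((q : Mt.space) : V → ℝ) w) •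
        ((e ⟨zf w ((q : Mt.space) : V → ℝ), hmemD q⟩ :
          Metric.closedBall (0 : EuclideanSpace ℝ (Fin d)) 1) : EuclideanSpace ℝ (Fin d))) := by
      apply Continuous.fun_smul
      · exact continuous_const.sub
          ((continuous_apply w).comp (continuous_subtype_val.comp continuous_subtype_val))
      · exact continuous_subtype_val.comp (e.continuous.comp (hzfc.subtype_mk hmemD))
    have hrestrict : Continuous (S.restrict (fun y : Mt.space => xiE e w (y : V → ℝ))) := by
      apply hnice.congr
      intro q
      show _ = xiE e w ((q : Mt.space) : V → ℝ)
      unfold xiE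
      rw [dif_pos ⟨hmemD q, q.2.2⟩]
    exact (continuousOn_iff_continuous_restrict.2 hrestrict) y ⟨hy, h1⟩
  · -- at the apex: squeeze
    have hyw : (y : V → ℝ) w = 1 := le_antisymm (Mt.coord_le_one y.2 w) (not_lt.1 h1)
    have h0 : xiE e w ((y : V → ℝ)) = 0 := xiE_of_not_lt h1
    show Filter.Tendsto (fun z : Mt.space => xiE e w (z : V → ℝ))
      (nhdsWithin y (coneRegion Mt bD w)) (nhds (xiE e w ((y : V → ℝ))))
    rw [h0]
    apply squeeze_zero_norm (a := fun z : Mt.space => 1 - (z : V → ℝ) w)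
    · intro z
      exact norm_xiE_le e w (Mt.coord_nonneg z.2 w) (Mt.coord_le_one z.2 w)
    · have hc : Continuous (fun z : Mt.space => 1 - (z : V → ℝ) w) :=
        continuous_const.sub ((continuous_apply w).comp continuous_subtype_val)
      have := (hc.tendsto y).mono_left (nhdsWithin_le_nhds
        (s := coneRegion Mt bD w))
      rwa [hyw, sub_self] at this

/-- continuity of the forward map -/
lemma hfun_continuous (hDM : D.IsSubcomplex M) (hbD : bD.IsSubcomplex D) (hw : w ∉ M.vertexSet)
    (hMt : Mt.faces = (M.faces \ {τ | τ ∈ D.faces ∧ τ ∉ bD.faces}) ∪ coneFaces w bD.faces) :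
    Continuous (fun y : Mt.space => hfun e w (y : V → ℝ)) := by
  apply continuous_of_closed_cover (s := {y : Mt.space | (y : V → ℝ) w = 0})
    (t := coneRegion Mt bD w)
  · exact isClosed_eq ((continuous_apply w).comp continuous_subtype_val) continuous_const
  · exact isClosed_coneRegion hMt
  · exact coneRegion_union hDM hbD hw hMt
  · -- on the zero set, hfun is the identity
    apply ContinuousOn.congr (continuous_subtype_val.continuousOn)
    intro y hy
    show hfun e w ((y : V → ℝ)) = ((y : V → ℝ))
    exact if_pos hy
  · -- on the cone region, hfun is coneF
    have hconeF : ContinuousOn (fun y : Mt.space => coneF e w (y : V → ℝ))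
        (coneRegion Mt bD w) := by
      have hxiB : ContinuousOn (fun y : Mt.space => xiBl e w (y : V → ℝ))
          (coneRegion Mt bD w) := by
        have h1 : ContinuousOn (fun y : Mt.space =>
            (⟨xiE e w (y : V → ℝ), xiE_mem_closedBall_Mt e y⟩ :
              Metric.closedBall (0 : EuclideanSpace ℝ (Fin d)) 1)) (coneRegion Mt bD w) := by
          rw [continuousOn_iff_continuous_restrict]
          apply Continuous.subtype_mk
          exact continuousOn_iff_continuous_restrict.1 (xiE_contOn hDM hbD hw hMt)
        apply h1.congr
        intro y _
        show xiBl e w ((y : V → ℝ)) = _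
        unfold xiBl
        rw [dif_pos (xiE_mem_closedBall_Mt e y)]
      exact continuous_subtype_val.comp_continuousOn
        (e.symm.continuous.comp_continuousOn hxiB)
    apply hconeF.congr
    intro y hy
    show hfun e w ((y : V → ℝ)) = coneF e w ((y : V → ℝ))
    unfold hfun
    rcases eq_or_ne ((y : V → ℝ) w) 0 with h0 | h0
    · rw [if_pos h0]
      exact (coneF_boundary hbD (bD_real_of_cone_zero hDM hbD hw y.2 hy h0) h0).symm
    · rw [if_neg h0]

end StarContinuity
section StarInvContinuity
open SComplex Filter

variable {V : Type*} {M Mt D bD : SComplex V} {d : ℕ} {w : V}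
variable {e : D.space ≃ₜ (Metric.closedBall (0 : EuclideanSpace ℝ (Fin d)) 1)}

/-- the interior region of `|D|` inside `|M|` is open -/
lemma isOpen_interior_region
    (hcof : ∀ σ ∈ M.faces, ∀ τ ∈ D.faces, τ ∉ bD.faces → τ ⊆ σ → σ ∈ D.faces) :
    IsOpen {x : M.space | (x : V → ℝ) ∈ D.realization ∧ (x : V → ℝ) ∉ bD.realization} := by
  rw [isOpen_iff_forall_mem_open]
  intro x hx
  obtain ⟨s, hs, hiff, hsum⟩ := M.exists_supp_face x.2
  have hsD : s ∈ D.faces := supp_face_of_real hx.1 hiff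
  have hsbD : s ∉ bD.faces := fun h =>
    hx.2 (mem_real_of_supp h (M.coord_nonneg x.2) (fun v hv => (hiff v).1 hv) hsum)
  refine ⟨{z : M.space | ∀ v ∈ s, (z : V → ℝ) v ≠ 0}, ?_, ?_, ?_⟩
  · intro z hz
    obtain ⟨t, ht, hifft, hsumt⟩ := M.exists_supp_face z.2
    have hst : s ⊆ t := fun v hv => (hifft v).1 (hz v hv)
    have hsne : s.Nonempty :=
      Finset.nonempty_iff_ne_empty.2 (fun h => M.not_empty_mem (h ▸ hs))
    have htD : t ∈ D.faces := hcof t ht s hsD hsbD hst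
    have htbD : t ∉ bD.faces := fun h => hsbD (bD.down_closed h hst hsne)
    constructor
    · exact mem_real_of_supp htD (M.coord_nonneg z.2) (fun v hv => (hifft v).1 hv) hsumt
    · intro hc
      exact htbD (supp_face_of_real hc hifft)
  · have : {z : M.space | ∀ v ∈ s, (z : V → ℝ) v ≠ 0}
        = ⋂ v ∈ s, {z : M.space | (z : V → ℝ) v ≠ 0} := by ext z; simp
    rw [this]
    apply isOpen_biInter_finset
    intro v _
    exact (isOpen_compl_singleton).preimage ((continuous_apply v).comp continuous_subtype_val)
  · intro v hv
    exact (hiff v).2 hv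

lemma bmapE_contOn :
    ContinuousOn (fun x : M.space => bmapE e (x : V → ℝ))
      {x : M.space | (x : V → ℝ) ∈ D.realization} := by
  rw [continuousOn_iff_continuous_restrict]
  have hnice : Continuous (fun q : {x : M.space | (x : V → ℝ) ∈ D.realization} =>
      ((e ⟨((q : M.space) : V → ℝ), q.2⟩ :
        Metric.closedBall (0 : EuclideanSpace ℝ (Fin d)) 1) : EuclideanSpace ℝ (Fin d))) := by
    exact continuous_subtype_val.comp (e.continuous.comp
      ((continuous_subtype_val.comp continuous_subtype_val).subtype_mk (fun q => q.2)))
  apply hnice.congr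
  intro q
  show _ = bmapE e (((q : M.space)) : V → ℝ)
  unfold bmapE
  rw [dif_pos (show ((q : M.space) : V → ℝ) ∈ D.realization from q.2)]

/-- continuity of the inverse map on the `|D|` region -/
lemma cone'F_contOn (hDM : D.IsSubcomplex M) (hw : w ∉ M.vertexSet) :
    ContinuousOn (fun x : M.space => cone'F e w (x : V → ℝ))
      {x : M.space | (x : V → ℝ) ∈ D.realization} := by
  set B' : Set M.space := {x : M.space | (x : V → ℝ) ∈ D.realization} with hB'
  have hbm : ContinuousOn (fun x : M.space => bmapE e (x : V → ℝ)) B' := bmapE_contOn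
  rw [continuousOn_pi]
  intro v
  -- the z' factor, as a function
  set Z : M.space → ℝ := fun x =>
    ((e.symm ⟨‖bmapE e (x : V → ℝ)‖⁻¹ • bmapE e (x : V → ℝ),
      inv_norm_smul_mem_closedBall _⟩ : D.space) : V → ℝ) v with hZ
  have hZbd : ∀ x : M.space, |Z x| ≤ 1 := by
    intro x
    have h2 := (e.symm ⟨‖bmapE e (x : V → ℝ)‖⁻¹ • bmapE e (x : V → ℝ),
      inv_norm_smul_mem_closedBall _⟩).2
    rw [abs_le]
    exact ⟨by linarith [D.coord_nonneg h2 v], D.coord_le_one h2 v⟩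
  have hfirst : ContinuousOn (fun x : M.space =>
      (1 - ‖bmapE e (x : V → ℝ)‖) * dwf w v) B' :=
    ((continuousOn_const.sub hbm.norm).mul continuousOn_const)
  have hsecond : ContinuousOn (fun x : M.space => ‖bmapE e (x : V → ℝ)‖ * Z x) B' := by
    intro x hxB
    rcases eq_or_ne (bmapE e (x : V → ℝ)) 0 with hb0 | hb0
    · -- squeeze at the center
      have hval : ‖bmapE e ((x : V → ℝ))‖ * Z x = 0 := by
        rw [hb0, norm_zero, zero_mul]
      show Filter.Tendsto (fun z : M.space => ‖bmapE e (z : V → ℝ)‖ * Z z)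
        (nhdsWithin x B') (nhds (‖bmapE e ((x : V → ℝ))‖ * Z x))
      rw [hval]
      apply squeeze_zero_norm (a := fun z : M.space => ‖bmapE e (z : V → ℝ)‖)
      · intro z
        rw [Real.norm_eq_abs, abs_mul, abs_norm]
        calc ‖bmapE e (z : V → ℝ)‖ * |Z z|
            ≤ ‖bmapE e (z : V → ℝ)‖ * 1 :=
              mul_le_mul_of_nonneg_left (hZbd z) (norm_nonneg _)
          _ = ‖bmapE e (z : V → ℝ)‖ := mul_one _
      · have h3 := (hbm x hxB).norm
        have h4 : ‖bmapE e ((x : V → ℝ))‖ = 0 := by rw [hb0, norm_zero]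
        simpa only [ContinuousWithinAt, h4] using h3
    · -- away from the center: composition of continuous maps
      have ht : (fun z : M.space => bmapE e (z : V → ℝ)) ⁻¹' {(0 : EuclideanSpace ℝ (Fin d))}ᶜ
          ∈ nhdsWithin x B' :=
        (hbm x hxB).preimage_mem_nhdsWithin (compl_singleton_mem_nhds hb0)
      rw [← continuousWithinAt_inter' ht]
      set S : Set M.space := B' ∩ _ with hS
      rw [show ContinuousWithinAt (fun z : M.space => ‖bmapE e (z : V → ℝ)‖ * Z z) S x
        ↔ True from iff_of_true ?_ trivial]
      · trivial
      have hSsub : S ⊆ B' := Set.inter_subset_left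
      have hbmS : Continuous (S.restrict (fun z : M.space => bmapE e (z : V → ℝ))) :=
        continuousOn_iff_continuous_restrict.1 (hbm.mono hSsub)
      have hne : ∀ q : S, ‖bmapE e (((q : M.space)) : V → ℝ)‖ ≠ 0 := by
        intro q
        have := q.2.2
        simp only [Set.mem_preimage, Set.mem_compl_iff, Set.mem_singleton_iff] at this
        exact norm_ne_zero_iff.2 this
      have hZS : Continuous (S.restrict Z) := by
        apply (continuous_apply v).comp (f := fun q : S => ((e.symm ⟨‖bmapE e ((q : M.space) : V → ℝ)‖⁻¹ • bmapE e ((q : M.space) : V → ℝ), inv_norm_smul_mem_closedBall _⟩ : D.space) : V → ℝ))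
        apply continuous_subtype_val.comp
        apply (Homeomorph.continuous e.symm).comp
        apply Continuous.subtype_mk
        exact (hbmS.norm.inv₀ hne).smul hbmS
      have : Continuous (S.restrict (fun z : M.space => ‖bmapE e (z : V → ℝ)‖ * Z z)) :=
        hbmS.norm.mul hZS
      exact (continuousOn_iff_continuous_restrict.2 this) x ⟨hxB, by
        simp only [Set.mem_preimage, Set.mem_compl_iff, Set.mem_singleton_iff]; exact hb0⟩
  have := hfirst.add hsecond
  apply this.congr
  intro x _
  rfl

/-- full continuity of the inverse map -/
lemma h'fun_continuous (hDM : D.IsSubcomplex M) (hbD : bD.IsSubcomplex D)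
    (hw : w ∉ M.vertexSet) (hfin : D.vertexSet.Finite)
    (hcof : ∀ σ ∈ M.faces, ∀ τ ∈ D.faces, τ ∉ bD.faces → τ ⊆ σ → σ ∈ D.faces)
    (hsph : ∀ x : D.space, (x : V → ℝ) ∈ bD.realization ↔
      ((e x : EuclideanSpace ℝ (Fin d)) ∈
        Metric.sphere (0 : EuclideanSpace ℝ (Fin d)) 1)) :
    Continuous (fun x : M.space => h'fun e w (x : V → ℝ)) := by
  apply continuous_of_closed_cover
    (s := {x : M.space | ¬((x : V → ℝ) ∈ D.realization ∧ (x : V → ℝ) ∉ bD.realization)})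
    (t := {x : M.space | (x : V → ℝ) ∈ D.realization})
  · rw [show {x : M.space | ¬((x : V → ℝ) ∈ D.realization ∧ (x : V → ℝ) ∉ bD.realization)}
        = {x : M.space | (x : V → ℝ) ∈ D.realization ∧ (x : V → ℝ) ∉ bD.realization}ᶜ from rfl]
    exact (isOpen_interior_region hcof).isClosed_compl
  · exact (isClosed_realization hfin).preimage continuous_subtype_val
  · ext x
    simp only [Set.mem_union, Set.mem_setOf_eq, Set.mem_univ, iff_true]
    by_cases h : (x : V → ℝ) ∈ D.realization
    · exact Or.inr h
    · exact Or.inl (fun hc => h hc.1)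
  · -- on the non-interior region, h'fun is the identity
    apply ContinuousOn.congr (continuous_subtype_val.continuousOn)
    intro x hx
    show h'fun e w ((x : V → ℝ)) = ((x : V → ℝ))
    unfold h'fun
    split
    · next h =>
      simp only [Set.mem_setOf_eq, not_and, not_not] at hx
      exact cone'F_boundary hbD hsph h (hx h)
    · rfl
  · -- on |D|, h'fun is cone'F
    apply ContinuousOn.congr (cone'F_contOn hDM hw)
    intro x hx
    show h'fun e w ((x : V → ℝ)) = cone'F e w ((x : V → ℝ))
    exact if_pos hx

end StarInvContinuity
section StarAssemble
open SComplex Finset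

variable {V W' : Type*} {M Mt D bD : SComplex V} {d : ℕ} {w : V}
variable {e : D.space ≃ₜ (Metric.closedBall (0 : EuclideanSpace ℝ (Fin d)) 1)}

/-- the homeomorphism `|Mt| ≃ |M|` -/
noncomputable def starHomeo (hDM : D.IsSubcomplex M) (hbD : bD.IsSubcomplex D)
    (hw : w ∉ M.vertexSet) (hfin : D.vertexSet.Finite)
    (hcof : ∀ σ ∈ M.faces, ∀ τ ∈ D.faces, τ ∉ bD.faces → τ ⊆ σ → σ ∈ D.faces)
    (hMt : Mt.faces = (M.faces \ {τ | τ ∈ D.faces ∧ τ ∉ bD.faces}) ∪ coneFaces w bD.faces)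
    (hsph : ∀ x : D.space, (x : V → ℝ) ∈ bD.realization ↔
      ((e x : EuclideanSpace ℝ (Fin d)) ∈
        Metric.sphere (0 : EuclideanSpace ℝ (Fin d)) 1)) :
    Mt.space ≃ₜ M.space where
  toFun y := ⟨hfun e w (y : V → ℝ), hfun_mem_M hDM hbD hMt y.2⟩
  invFun x := ⟨h'fun e w (x : V → ℝ), h'fun_mem_Mt hDM hbD hw hMt hsph x.2⟩
  left_inv y := Subtype.ext (hfun_leftInv hDM hbD hw hMt hsph y.2)
  right_inv x := Subtype.ext (hfun_rightInv hDM hbD hw hMt hsph x.2)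
  continuous_toFun := (hfun_continuous hDM hbD hw hMt).subtype_mk _
  continuous_invFun := (h'fun_continuous hDM hbD hw hfin hcof hsph).subtype_mk _

/-- image of a complex under a vertex map -/
def imageComplex (f : V → W') (D : SComplex V) : SComplex W' where
  faces := {ρ | ∃ σ ∈ D.faces, σ.image f = ρ}
  not_empty_mem := by
    rintro ⟨σ, hσ, h⟩
    rw [Finset.image_eq_empty] at h
    exact D.not_empty_mem (h ▸ hσ)
  down_closed := by
    rintro s t ⟨σ, hσ, rfl⟩ hts htne
    refine ⟨σ.filter (fun v => f v ∈ t), ?_, ?_⟩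
    · apply D.down_closed hσ (Finset.filter_subset _ _)
      obtain ⟨u, hu⟩ := htne
      obtain ⟨v, hv, hfv⟩ := Finset.mem_image.1 (hts hu)
      exact ⟨v, Finset.mem_filter.2 ⟨hv, by rw [hfv]; exact hu⟩⟩
    · ext u
      simp only [Finset.mem_image, Finset.mem_filter]
      constructor
      · rintro ⟨v, ⟨-, hv⟩, rfl⟩; exact hv
      · intro hu
        obtain ⟨v, hv, hfv⟩ := Finset.mem_image.1 (hts hu)
        exact ⟨v, ⟨hv, by rw [hfv]; exact hu⟩, hfv⟩

lemma imageComplex_subcomplex {f : V → W'} {K : SComplex W'}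
    (hf : ∀ σ ∈ D.faces, σ.image f ∈ K.faces) :
    (imageComplex f D).IsSubcomplex K := by
  rintro ρ ⟨σ, hσ, rfl⟩
  exact hf σ hσ

lemma imageComplex_vertexSet {f : V → W'} :
    (imageComplex f D).vertexSet ⊆ f '' D.vertexSet := by
  rintro u ⟨σ, hσ, hu⟩
  obtain ⟨v, hv⟩ : ∃ v, v ∈ σ ∧ f v = u := by
    have : u ∈ σ.image f := by rw [hu]; exact Finset.mem_singleton_self u
    obtain ⟨v, hv, hfv⟩ := Finset.mem_image.1 this
    exact ⟨v, hv, hfv⟩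
  exact ⟨v, vertex_of_mem_face hσ hv.1, hv.2⟩

/-- the modified vertex map sending `w` to the cone vertex `u` -/
noncomputable def phit (f : V → W') (w : V) (u : W') : V → W' := fun v => if v = w then u else f v

lemma phit_map_faces {K : SComplex W'} {f : V → W'} {u : W'}
    (hDM : D.IsSubcomplex M) (hbD : bD.IsSubcomplex D) (hw : w ∉ M.vertexSet)
    (hMt : Mt.faces = (M.faces \ {τ | τ ∈ D.faces ∧ τ ∉ bD.faces}) ∪ coneFaces w bD.faces)
    (hf : ∀ σ ∈ M.faces, σ.image f ∈ K.faces)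
    (hu : ({u} : Finset W') ∈ K.faces)
    (hustar : ∀ τ ∈ bD.faces, insert u (τ.image f) ∈ K.faces) :
    ∀ σ ∈ Mt.faces, σ.image (phit f w u) ∈ K.faces := by
  intro σ hσ
  have himage : ∀ ρ : Finset V, ρ ∈ M.faces → ρ.image (phit f w u) = ρ.image f := by
    intro ρ hρ
    apply Finset.image_congr
    intro v hv
    unfold phit
    rw [if_neg (fun h : v = w => (w_not_mem_Mface hw hρ) (h ▸ hv))]
  rw [mem_Mt_faces_iff hMt] at hσ
  rcases hσ with ⟨hM, -⟩ | hbDf | ⟨τ, hτ, rfl⟩ | hww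
  · rw [himage σ hM]; exact hf σ hM
  · rw [himage σ (hDM (hbD hbDf))]; exact hf σ (hDM (hbD hbDf))
  · rw [Finset.image_insert]
    have h1 : phit f w u w = u := if_pos rfl
    have h2 : τ.image (phit f w u) = τ.image f := himage τ (hDM (hbD hτ))
    rw [h1, h2]
    exact hustar τ hτ
  · rw [hww, Finset.image_singleton]
    have : phit f w u w = u := if_pos rfl
    rw [this]
    exact hu

lemma pushforward_congr_of_supp {f g : V → W'} {x : V → ℝ} {σ : Finset V}
    (hsupp : ∀ v, x v ≠ 0 → v ∈ σ) (hfg : ∀ v, x v ≠ 0 → f v = g v) :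
    pushforward f x = pushforward g x := by
  funext w'
  have hsupp' : ∀ v, x v ≠ 0 → v ∈ σ.filter (fun v => x v ≠ 0) :=
    fun v hv => Finset.mem_filter.2 ⟨hsupp v hv, hv⟩
  rw [pushforward_eq_sum hsupp' w', pushforward_eq_sum hsupp' w']
  apply Finset.sum_congr
  · apply Finset.filter_congr
    intro v hv
    rw [hfg v (Finset.mem_filter.1 hv).2]
  · intros; rfl

/-- pushforward of the apex -/
lemma pushforward_phit_apex {f : V → W'} {u : W'} :
    pushforward (phit f w u) (dwf w) = fun w' => if w' = u then 1 else 0 := by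
  funext w'
  have hsupp : ∀ v, dwf w v ≠ 0 → v ∈ ({w} : Finset V) := by
    intro v hv
    unfold dwf at hv
    rcases eq_or_ne v w with h | h
    · simp [h]
    · simp [h] at hv
  rw [pushforward_eq_sum hsupp w']
  have hphitw : phit f w u w = u := if_pos rfl
  rcases eq_or_ne w' u with h | h
  · rw [Finset.filter_singleton]
    rw [if_pos (by rw [hphitw, h])]
    rw [Finset.sum_singleton, if_pos h]
    unfold dwf; simp
  · rw [Finset.filter_singleton]
    rw [if_neg (by rw [hphitw]; exact fun hc => h hc.symm)]
    rw [Finset.sum_empty, if_neg h]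

/-- support of `zf` -/
lemma zf_supp {x : V → ℝ} {τ : Finset V} (hwτ : w ∉ τ)
    (hsupp : ∀ v, x v ≠ 0 → v ∈ insert w τ) :
    ∀ v, zf w x v ≠ 0 → v ∈ τ := by
  intro v hv
  unfold zf at hv
  rcases eq_or_ne v w with h | h
  · simp [h] at hv
  · simp only [h, if_false] at hv
    have : x v ≠ 0 := fun hc => hv (by rw [hc]; simp)
    rcases Finset.mem_insert.1 (hsupp v this) with hh | hh
    · exact absurd hh h
    · exact hh

/-- the key formula: pushforward of `phit` on a cone point -/
lemma pushforward_phit_cone (hDM : D.IsSubcomplex M) (hbD : bD.IsSubcomplex D)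
    (hw : w ∉ M.vertexSet)
    (hMt : Mt.faces = (M.faces \ {τ | τ ∈ D.faces ∧ τ ∉ bD.faces}) ∪ coneFaces w bD.faces)
    {f : V → W'} {u : W'} {x : V → ℝ} (hx : x ∈ Mt.realization) (h1 : x w ≠ 1) :
    pushforward (phit f w u) x
      = fun w' => (1 - x w) * pushforward f (zf w x) w' + x w * (if w' = u then 1 else 0) := by
  rcases eq_or_ne (x w) 0 with h0 | h0
  · rw [zf_of_zero h0]
    funext w'
    rw [h0]
    obtain ⟨s, hs, hiff, hsum⟩ := Mt.exists_supp_face hx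
    have hws : w ∉ s := fun h => ((hiff w).2 h) h0
    have := pushforward_congr_of_supp (f := phit f w u) (g := f) (fun v hv => (hiff v).1 hv)
      (fun v hv => by
        unfold phit
        rw [if_neg (fun h : v = w => hws (h ▸ (hiff v).1 hv))])
    rw [this]
    ring
  · obtain ⟨τ, hτ, hsupp⟩ := cone_decomp hDM hbD hw hMt hx h0 h1
    have hwτ : w ∉ τ := w_not_mem_bDface hDM hbD hw hτ
    have hxw1 : x w < 1 := lt_of_le_of_ne (Mt.coord_le_one hx w) h1
    have hpos : (0:ℝ) < 1 - x w := by linarith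
    funext w'
    rw [pushforward_eq_sum hsupp w', pushforward_eq_sum (zf_supp hwτ hsupp) w']
    have hfilter : (insert w τ).filter (fun v => phit f w u v = w')
        = (if u = w' then insert w (τ.filter (fun v => phit f w u v = w'))
            else τ.filter (fun v => phit f w u v = w')) := by
      rw [Finset.filter_insert]
      congr 1
      unfold phit
      rw [if_pos rfl]
    have hfe : τ.filter (fun v => phit f w u v = w') = τ.filter (fun v => f v = w') := by
      apply Finset.filter_congr
      intro v hv
      unfold phit
      rw [if_neg (fun h : v = w => hwτ (h ▸ hv))]
    have hsum2 : (1 - x w) * ∑ v ∈ τ.filter (fun v => f v = w'), zf w x v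
        = ∑ v ∈ τ.filter (fun v => f v = w'), x v := by
      rw [Finset.mul_sum]
      apply Finset.sum_congr rfl
      intro v hv
      have hvτ : v ∈ τ := (Finset.mem_filter.1 hv).1
      unfold zf
      rw [if_neg (fun h : v = w => hwτ (h ▸ hvτ))]
      field_simp
    rw [hfilter]
    rcases eq_or_ne u w' with h | h
    · rw [if_pos h, Finset.sum_insert (fun hc => hwτ (Finset.mem_of_mem_filter w hc)),
        hfe, hsum2, if_pos h.symm]
      ring
    · rw [if_neg h, hfe, hsum2, if_neg (fun hc => h hc.symm)]
      ring

/-- a convex combination of a star point and the star vertex lies in the realization -/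
lemma comb_mem_star {K : SComplex W'} {u : W'} {S : Finset W'}
    (hKins : insert u S ∈ K.faces) {p : W' → ℝ}
    (hnn : ∀ w', 0 ≤ p w') (hsupp : ∀ w', p w' ≠ 0 → w' ∈ S) (hsum : ∑ w' ∈ S, p w' = 1)
    {m : ℝ} (hm0 : 0 ≤ m) (hm1 : m ≤ 1) :
    (fun w' => (1 - m) * p w' + m * (if w' = u then 1 else 0)) ∈ K.realization := by
  refine mem_real_of_supp hKins ?_ ?_ ?_
  · intro w'
    have := hnn w'
    have h2 : (0:ℝ) ≤ (if w' = u then (1:ℝ) else 0) := by split <;> norm_num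
    nlinarith
  · intro w' hw'
    rcases eq_or_ne w' u with h | h
    · exact h ▸ Finset.mem_insert_self u S
    · apply Finset.mem_insert_of_mem
      apply hsupp
      intro hc
      apply hw'
      rw [hc, if_neg h]
      ring
  · have hsum1 : ∑ w' ∈ insert u S, p w' = 1 := by
      rw [← hsum]
      exact sum_congr_supp (fun w' hw' => Finset.mem_insert_of_mem (hsupp w' hw'))
        (fun w' hw' => hsupp w' hw')
    have hsum2 : ∑ w' ∈ insert u S, (if w' = u then (1:ℝ) else 0) = 1 := by
      rw [Finset.sum_ite_eq' (insert u S) u (fun _ => (1:ℝ))]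
      rw [if_pos (Finset.mem_insert_self u S)]
    rw [Finset.sum_add_distrib, ← Finset.mul_sum, ← Finset.mul_sum, hsum1, hsum2]
    ring

end StarAssemble
section StarHomotopy
open SComplex Finset Filter

variable {V W' : Type*} {M Mt D bD : SComplex V} {d : ℕ} {w : V}
variable {e : D.space ≃ₜ (Metric.closedBall (0 : EuclideanSpace ℝ (Fin d)) 1)}

/-- the reparametrized radial retraction used in the homotopy -/
noncomputable def psif (w : V) (y : V → ℝ) (s : ℝ) : V → ℝ :=
  fun v => if v = w then (y w - min (y w) s) / (1 - min (y w) s)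
    else y v / (1 - min (y w) s)

lemma psif_m_zero {y : V → ℝ} {s : ℝ} (h : min (y w) s = 0) : psif w y s = y := by
  funext v
  unfold psif
  rw [h]
  rcases eq_or_ne v w with hv | hv
  · rw [if_pos hv, hv]; simp
  · rw [if_neg hv]; simp

lemma psif_eq_zf {y : V → ℝ} {s : ℝ} (h : min (y w) s = y w) : psif w y s = zf w y := by
  funext v
  unfold psif zf
  rw [h]
  rcases eq_or_ne v w with hv | hv
  · rw [if_pos hv, if_pos hv, sub_self, zero_div]
  · rw [if_neg hv, if_neg hv]

lemma psif_mem (hDM : D.IsSubcomplex M) (hbD : bD.IsSubcomplex D) (hw : w ∉ M.vertexSet)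
    (hMt : Mt.faces = (M.faces \ {τ | τ ∈ D.faces ∧ τ ∉ bD.faces}) ∪ coneFaces w bD.faces)
    {y : V → ℝ} {s : ℝ} (hy : y ∈ Mt.realization) (hs : 0 ≤ s)
    (hm : min (y w) s < 1) : psif w y s ∈ Mt.realization := by
  have hm0 : 0 ≤ min (y w) s := le_min (Mt.coord_nonneg hy w) hs
  have hmne : (0:ℝ) < 1 - min (y w) s := by linarith
  rcases eq_or_ne (min (y w) s) 0 with h0 | h0
  · rw [psif_m_zero h0]
    exact hy
  · have htpos : 0 < y w :=
      lt_of_lt_of_le (lt_of_le_of_ne hm0 (Ne.symm h0)) (min_le_left _ _)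
    rcases eq_or_ne (y w) 1 with h1 | h1
    · -- apex
      have hyd : y = dwf w := apex_eq hMt hy h1
      have heq : psif w y s = dwf w := by
        funext v
        unfold psif
        rcases eq_or_ne v w with hv | hv
        · rw [if_pos hv, hv, h1]
          have hdw : dwf w w = 1 := by unfold dwf; rw [if_pos rfl]
          rw [hdw, div_self]
          intro hc
          rw [h1] at hmne
          linarith [hc ▸ hmne]
        · rw [if_neg hv]
          have hyv : y v = 0 := by
            rw [hyd]; unfold dwf; rw [if_neg hv]
          have hdv : dwf w v = 0 := by unfold dwf; rw [if_neg hv]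
          rw [hyv, hdv, zero_div]
      rw [heq, ← hyd]
      exact hy
    · obtain ⟨τ, hτ, hsupp⟩ := cone_decomp hDM hbD hw hMt hy (ne_of_gt htpos) h1
      have hwτ : w ∉ τ := w_not_mem_bDface hDM hbD hw hτ
      have hsum1 : ∑ v ∈ insert w τ, y v = 1 := Mt.sum_eq_one_of_supp hy hsupp
      have hsumτ : ∑ v ∈ τ, y v = 1 - y w := by
        rw [Finset.sum_insert hwτ] at hsum1; linarith
      refine mem_real_of_supp (insert_w_mem_Mt hMt hτ) ?_ ?_ ?_
      · intro v
        unfold psif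
        rcases eq_or_ne v w with hv | hv
        · rw [if_pos hv]
          apply div_nonneg _ (le_of_lt hmne)
          have : min (y w) s ≤ y w := min_le_left _ _
          linarith
        · rw [if_neg hv]
          exact div_nonneg (Mt.coord_nonneg hy v) (le_of_lt hmne)
      · intro v hv
        unfold psif at hv
        rcases eq_or_ne v w with hv' | hv'
        · exact hv' ▸ Finset.mem_insert_self w τ
        · rw [if_neg hv'] at hv
          have : y v ≠ 0 := fun hc => hv (by rw [hc]; simp)
          exact hsupp v this
      · rw [Finset.sum_insert hwτ]
        unfold psif
        rw [if_pos rfl]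
        have hcong : ∀ v ∈ τ, (if v = w then (y w - min (y w) s) / (1 - min (y w) s)
            else y v / (1 - min (y w) s)) = y v / (1 - min (y w) s) := by
          intro v hv
          rw [if_neg (fun h : v = w => hwτ (h ▸ hv))]
        rw [Finset.sum_congr rfl hcong, ← Finset.sum_div, hsumτ]
        field_simp
        ring

/-- the total function version landing in `Mt.space` -/
noncomputable def psiMapP
    (hMt : Mt.faces = (M.faces \ {τ | τ ∈ D.faces ∧ τ ∉ bD.faces}) ∪ coneFaces w bD.faces)
    (p : Mt.space × unitInterval) : Mt.space :=
  if h : psif w ((p.1 : V → ℝ)) ((p.2 : ℝ)) ∈ Mt.realization then ⟨_, h⟩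
  else ⟨dwf w, dwf_mem_Mt hMt⟩

lemma psiMapP_val
    (hDM : D.IsSubcomplex M) (hbD : bD.IsSubcomplex D) (hw : w ∉ M.vertexSet)
    (hMt : Mt.faces = (M.faces \ {τ | τ ∈ D.faces ∧ τ ∉ bD.faces}) ∪ coneFaces w bD.faces)
    {p : Mt.space × unitInterval} (hm : min ((p.1 : V → ℝ) w) ((p.2 : ℝ)) < 1) :
    ((psiMapP hMt p) : V → ℝ) = psif w ((p.1 : V → ℝ)) ((p.2 : ℝ)) := by
  unfold psiMapP
  rw [dif_pos (psif_mem hDM hbD hw hMt p.1.2 p.2.2.1 hm)]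

end StarHomotopy
section StarHomotopy2
open SComplex Finset Filter

variable {V W' : Type*} {M Mt D bD : SComplex V} {d : ℕ} {w : V}
variable {e : D.space ≃ₜ (Metric.closedBall (0 : EuclideanSpace ℝ (Fin d)) 1)}

lemma pushforward_nonneg_of_real {N : SComplex V} {f : V → W'} {x : V → ℝ}
    (hx : x ∈ N.realization) (w' : W') : 0 ≤ pushforward f x w' := by
  obtain ⟨σ, -, hiff, -⟩ := N.exists_supp_face hx
  exact pushforward_nonneg (fun v hv => (hiff v).1 hv) (N.coord_nonneg hx) w'

lemma Hterm_continuous (hDM : D.IsSubcomplex M) (hbD : bD.IsSubcomplex D)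
    (hw : w ∉ M.vertexSet)
    (hMt : Mt.faces = (M.faces \ {τ | τ ∈ D.faces ∧ τ ∉ bD.faces}) ∪ coneFaces w bD.faces)
    (f : V → W') (w' : W') :
    Continuous (fun p : Mt.space × unitInterval =>
      (1 - min ((p.1 : V → ℝ) w) ((p.2 : ℝ))) *
        pushforward f (hfun e w ((psiMapP hMt p : Mt.space) : V → ℝ)) w') := by
  have hmin : Continuous (fun p : Mt.space × unitInterval =>
      min ((p.1 : V → ℝ) w) ((p.2 : ℝ))) :=
    (((continuous_apply w).comp (continuous_subtype_val.comp continuous_fst)).min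
      (continuous_subtype_val.comp continuous_snd))
  have hmapc : Continuous (fun z : Mt.space =>
      (⟨hfun e w (z : V → ℝ), hfun_mem_M hDM hbD hMt z.2⟩ : M.space)) :=
    (hfun_continuous hDM hbD hw hMt).subtype_mk _
  have hPhi : Continuous (fun z : Mt.space => pushforward f (hfun e w (z : V → ℝ)) w') := by
    have := (pushforward_coord_continuous M f w').comp hmapc
    exact this
  have hPhi_bd : ∀ z : Mt.space, |pushforward f (hfun e w (z : V → ℝ)) w'| ≤ 1 := by
    intro z
    have hmem := hfun_mem_M (e := e) hDM hbD hMt z.2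
    rw [abs_le]
    constructor
    · linarith [pushforward_nonneg_of_real (f := f) hmem w']
    · exact pushforward_le_one hmem w'
  rw [continuous_iff_continuousAt]
  intro p0
  by_cases h1 : min ((p0.1 : V → ℝ) w) ((p0.2 : ℝ)) < 1
  · have hO : IsOpen {p : Mt.space × unitInterval |
        min ((p.1 : V → ℝ) w) ((p.2 : ℝ)) < 1} := isOpen_lt hmin continuous_const
    apply ContinuousOn.continuousAt _ (hO.mem_nhds h1)
    rw [continuousOn_iff_continuous_restrict]
    set S := {p : Mt.space × unitInterval | min ((p.1 : V → ℝ) w) ((p.2 : ℝ)) < 1} with hS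
    have hpsimem : ∀ q : S, psif w ((q.1.1 : V → ℝ)) ((q.1.2 : ℝ)) ∈ Mt.realization :=
      fun q => psif_mem hDM hbD hw hMt q.1.1.2 q.1.2.2.1 q.2
    have hminS : Continuous (fun q : S => min ((q.1.1 : V → ℝ) w) ((q.1.2 : ℝ))) :=
      hmin.comp continuous_subtype_val
    have hdenne : ∀ q : S, 1 - min ((q.1.1 : V → ℝ) w) ((q.1.2 : ℝ)) ≠ 0 := by
      intro q
      have : min ((q.1.1 : V → ℝ) w) ((q.1.2 : ℝ)) < 1 := q.2
      intro hc
      rw [sub_eq_zero] at hc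
      exact absurd hc.symm (ne_of_lt this)
    have hpsic : Continuous (fun q : S => psif w ((q.1.1 : V → ℝ)) ((q.1.2 : ℝ))) := by
      apply continuous_pi
      intro v
      have hden : Continuous (fun q : S =>
          1 - min ((q.1.1 : V → ℝ) w) ((q.1.2 : ℝ))) := continuous_const.sub hminS
      rcases eq_or_ne v w with hv | hv
      · have heq : (fun q : S => psif w ((q.1.1 : V → ℝ)) ((q.1.2 : ℝ)) v)
            = fun q : S => ((q.1.1 : V → ℝ) w - min ((q.1.1 : V → ℝ) w) ((q.1.2 : ℝ)))
              / (1 - min ((q.1.1 : V → ℝ) w) ((q.1.2 : ℝ))) := by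
          funext q; unfold psif; rw [if_pos hv]
        rw [heq]
        exact (((continuous_apply w).comp (continuous_subtype_val.comp
          (continuous_fst.comp continuous_subtype_val))).sub hminS).div hden hdenne
      · have heq : (fun q : S => psif w ((q.1.1 : V → ℝ)) ((q.1.2 : ℝ)) v)
            = fun q : S => ((q.1.1 : V → ℝ) v)
              / (1 - min ((q.1.1 : V → ℝ) w) ((q.1.2 : ℝ))) := by
          funext q; unfold psif; rw [if_neg hv]
        rw [heq]
        exact ((continuous_apply v).comp (continuous_subtype_val.comp
          (continuous_fst.comp continuous_subtype_val))).div hden hdenne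
    apply Continuous.congr ((continuous_const.sub hminS).mul
      (hPhi.comp (hpsic.subtype_mk hpsimem)))
    intro q
    have hv := psiMapP_val hDM hbD hw hMt (p := q.1) q.2
    show (1 - min ((q.1.1 : V → ℝ) w) ((q.1.2 : ℝ))) *
        pushforward f (hfun e w (psif w ((q.1.1 : V → ℝ)) ((q.1.2 : ℝ)))) w'
      = (1 - min ((q.1.1 : V → ℝ) w) ((q.1.2 : ℝ))) *
        pushforward f (hfun e w ((psiMapP hMt q.1 : Mt.space) : V → ℝ)) w'
    rw [hv]
  · have hm1 : min ((p0.1 : V → ℝ) w) ((p0.2 : ℝ)) = 1 :=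
      le_antisymm (le_trans (min_le_right _ _) p0.2.2.2) (not_lt.1 h1)
    show Filter.Tendsto (fun p : Mt.space × unitInterval =>
        (1 - min ((p.1 : V → ℝ) w) ((p.2 : ℝ))) *
          pushforward f (hfun e w ((psiMapP hMt p : Mt.space) : V → ℝ)) w')
      (nhds p0) (nhds ((1 - min ((p0.1 : V → ℝ) w) ((p0.2 : ℝ))) *
          pushforward f (hfun e w ((psiMapP hMt p0 : Mt.space) : V → ℝ)) w'))
    have hval : (1 - min ((p0.1 : V → ℝ) w) ((p0.2 : ℝ))) *
        pushforward f (hfun e w ((psiMapP hMt p0 : Mt.space) : V → ℝ)) w' = 0 := by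
      rw [hm1]; ring
    rw [hval]
    apply squeeze_zero_norm (a := fun p : Mt.space × unitInterval =>
      1 - min ((p.1 : V → ℝ) w) ((p.2 : ℝ)))
    · intro p
      have hm1p : min ((p.1 : V → ℝ) w) ((p.2 : ℝ)) ≤ 1 :=
        le_trans (min_le_right _ _) p.2.2.2
      rw [Real.norm_eq_abs, abs_mul]
      calc |1 - min ((p.1 : V → ℝ) w) ((p.2 : ℝ))| *
            |pushforward f (hfun e w ((psiMapP hMt p : Mt.space) : V → ℝ)) w'|
          ≤ |1 - min ((p.1 : V → ℝ) w) ((p.2 : ℝ))| * 1 :=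
            mul_le_mul_of_nonneg_left (hPhi_bd (psiMapP hMt p)) (abs_nonneg _)
        _ = 1 - min ((p.1 : V → ℝ) w) ((p.2 : ℝ)) := by
            rw [mul_one, abs_of_nonneg (by linarith)]
    · have h2 : Filter.Tendsto (fun p : Mt.space × unitInterval =>
          1 - min ((p.1 : V → ℝ) w) ((p.2 : ℝ))) (nhds p0)
          (nhds (1 - min ((p0.1 : V → ℝ) w) ((p0.2 : ℝ)))) :=
        (continuous_const.sub hmin).tendsto p0
      rwa [hm1, sub_self] at h2

lemma Hval_mem {K : SComplex W'} {f : V → W'} {u : W'}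
    (hDM : D.IsSubcomplex M) (hbD : bD.IsSubcomplex D) (hw : w ∉ M.vertexSet)
    (hMt : Mt.faces = (M.faces \ {τ | τ ∈ D.faces ∧ τ ∉ bD.faces}) ∪ coneFaces w bD.faces)
    (hf : ∀ σ ∈ M.faces, σ.image f ∈ K.faces)
    (hu : ({u} : Finset W') ∈ K.faces)
    (hustarD : ∀ σ ∈ D.faces, insert u (σ.image f) ∈ K.faces)
    (p : Mt.space × unitInterval) :
    (fun w' => (1 - min ((p.1 : V → ℝ) w) ((p.2 : ℝ))) *
        pushforward f (hfun e w ((psiMapP hMt p : Mt.space) : V → ℝ)) w'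
      + min ((p.1 : V → ℝ) w) ((p.2 : ℝ)) * (if w' = u then 1 else 0))
      ∈ K.realization := by
  have hm0 : 0 ≤ min ((p.1 : V → ℝ) w) ((p.2 : ℝ)) :=
    le_min (Mt.coord_nonneg p.1.2 w) p.2.2.1
  have hm1 : min ((p.1 : V → ℝ) w) ((p.2 : ℝ)) ≤ 1 :=
    le_trans (min_le_right _ _) p.2.2.2
  rcases eq_or_ne (min ((p.1 : V → ℝ) w) ((p.2 : ℝ))) 1 with h1 | h1
  · have heq : (fun w' => (1 - min ((p.1 : V → ℝ) w) ((p.2 : ℝ))) *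
        pushforward f (hfun e w ((psiMapP hMt p : Mt.space) : V → ℝ)) w'
        + min ((p.1 : V → ℝ) w) ((p.2 : ℝ)) * (if w' = u then 1 else 0))
        = fun w' => if w' = u then (1:ℝ) else 0 := by
      funext w'; rw [h1]; ring
    rw [heq]
    refine mem_real_of_supp hu ?_ ?_ ?_
    · intro w''; split <;> norm_num
    · intro w'' hw''
      rcases eq_or_ne w'' u with h | h
      · simp [h]
      · rw [if_neg h] at hw''; exact absurd rfl hw''
    · rw [Finset.sum_singleton, if_pos rfl]
  · have hmlt : min ((p.1 : V → ℝ) w) ((p.2 : ℝ)) < 1 := lt_of_le_of_ne hm1 h1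
    have hpsival := psiMapP_val hDM hbD hw hMt (p := p) hmlt
    have hx'M : hfun e w ((psiMapP hMt p : Mt.space) : V → ℝ) ∈ M.realization :=
      hfun_mem_M hDM hbD hMt (psiMapP hMt p).2
    rcases eq_or_ne (min ((p.1 : V → ℝ) w) ((p.2 : ℝ))) 0 with h0 | h0
    · have heq : (fun w' => (1 - min ((p.1 : V → ℝ) w) ((p.2 : ℝ))) *
          pushforward f (hfun e w ((psiMapP hMt p : Mt.space) : V → ℝ)) w'
          + min ((p.1 : V → ℝ) w) ((p.2 : ℝ)) * (if w' = u then 1 else 0))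
          = pushforward f (hfun e w ((psiMapP hMt p : Mt.space) : V → ℝ)) := by
        funext w'; rw [h0]; ring
      rw [heq]
      exact pushforward_mem_real hf hx'M
    · -- 0 < m < 1 : the image lands in the closed star of u
      have hx'D : hfun e w ((psiMapP hMt p : Mt.space) : V → ℝ) ∈ D.realization := by
        rw [hpsival]
        unfold hfun
        split
        · next hzero =>
          have hmle : min ((p.1 : V → ℝ) w) ((p.2 : ℝ)) ≤ (p.1 : V → ℝ) w := min_le_left _ _
          have hdenpos : (0:ℝ) < 1 - min ((p.1 : V → ℝ) w) ((p.2 : ℝ)) := by linarith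
          have hnum : (p.1 : V → ℝ) w - min ((p.1 : V → ℝ) w) ((p.2 : ℝ)) = 0 := by
            unfold psif at hzero
            rw [if_pos rfl] at hzero
            rcases div_eq_zero_iff.1 hzero with h | h
            · exact h
            · exfalso; linarith
          have hmin_eq : min ((p.1 : V → ℝ) w) ((p.2 : ℝ)) = (p.1 : V → ℝ) w := by linarith
          rw [psif_eq_zf hmin_eq]
          apply real_mono hbD
          apply zf_mem_bD hDM hbD hw hMt p.1.2
          · rw [← hmin_eq]; exact h0
          · rw [← hmin_eq]; exact h1
        · exact coneF_mem_D e w _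
      obtain ⟨σ', hσ', hiff', hsum'⟩ := D.exists_supp_face hx'D
      apply comb_mem_star (hustarD σ' hσ')
      · exact pushforward_nonneg (fun v hv => (hiff' v).1 hv) (M.coord_nonneg hx'M)
      · intro w'' hw''
        by_contra hc
        exact hw'' (pushforward_supp (fun v hv => (hiff' v).1 hv) w'' hc)
      · rw [pushforward_sum_image (fun v hv => (hiff' v).1 hv), hsum']
      · exact hm0
      · exact hm1

end StarHomotopy2
theorem starring_homotopy {V W : Type*} (r : ℤ) (hr : 1 ≤ r)
    (K : SComplex W) (M Mt : SComplex V) (φ : SMap M K)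
    (hK : K.IsConic r) (hstar : SComplex.IsStarring r M Mt) :
    ∃ (h : Mt.space ≃ₜ M.space) (φt : SMap Mt K),
      AmbientHomotopic K
        (fun y : Mt.space => pushforward φ.toFun ((h y : M.space) : V → ℝ))
        (fun y : Mt.space => pushforward φt.toFun ((y : Mt.space) : V → ℝ)) ∧
      (AmbientNullhomotopic K
          (fun x : M.space => pushforward φ.toFun ((x : M.space) : V → ℝ)) ↔
        AmbientNullhomotopic K
          (fun y : Mt.space => pushforward φt.toFun ((y : Mt.space) : V → ℝ))) := by
  classical
  obtain ⟨D, bD, d, w, hDM, hfin, hcard, hdisk, hcof, hw, hMt⟩ := hstar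
  obtain ⟨hbD, e, hsph⟩ := hdisk
  -- apply conicity to the image of D
  have hLsub : (imageComplex φ.toFun D).IsSubcomplex K :=
    imageComplex_subcomplex (fun σ hσ => φ.map_faces σ (hDM hσ))
  have hLfin : (imageComplex φ.toFun D).vertexSet.Finite :=
    (hfin.image φ.toFun).subset imageComplex_vertexSet
  have hLcard : ((imageComplex φ.toFun D).vertexSet.ncard : ℤ) ≤ r := by
    have h1 : (imageComplex φ.toFun D).vertexSet.ncard ≤ (φ.toFun '' D.vertexSet).ncard :=
      Set.ncard_le_ncard imageComplex_vertexSet (hfin.image φ.toFun)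
    have h2 : (φ.toFun '' D.vertexSet).ncard ≤ D.vertexSet.ncard := Set.ncard_image_le hfin
    have := le_trans h1 h2
    calc ((imageComplex φ.toFun D).vertexSet.ncard : ℤ) ≤ (D.vertexSet.ncard : ℤ) := by
          exact_mod_cast this
      _ ≤ r := hcard
  obtain ⟨u, huV, hustar⟩ := hK (imageComplex φ.toFun D) hLsub hLfin hLcard
  have hu : ({u} : Finset W) ∈ K.faces := huV
  have hustarD : ∀ σ ∈ D.faces, insert u (σ.image φ.toFun) ∈ K.faces :=
    fun σ hσ => hustar _ ⟨σ, hσ, rfl⟩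
  -- the homeomorphism and the new simplicial map
  set h : Mt.space ≃ₜ M.space := starHomeo hDM hbD hw hfin hcof hMt hsph with hhdef
  set φt : SMap Mt K := ⟨phit φ.toFun w u,
    phit_map_faces hDM hbD hw hMt φ.map_faces hu (fun τ hτ => hustarD τ (hbD hτ))⟩
    with hφtdef
  -- the homotopy
  have hmin : Continuous (fun p : Mt.space × unitInterval =>
      min ((p.1 : V → ℝ) w) ((p.2 : ℝ))) :=
    (((continuous_apply w).comp (continuous_subtype_val.comp continuous_fst)).min
      (continuous_subtype_val.comp continuous_snd))
  have hH : AmbientHomotopic K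
      (fun y : Mt.space => pushforward φ.toFun ((h y : M.space) : V → ℝ))
      (fun y : Mt.space => pushforward φt.toFun ((y : Mt.space) : V → ℝ)) := by
    refine ⟨⟨fun p => ⟨fun w' => (1 - min ((p.1 : V → ℝ) w) ((p.2 : ℝ))) *
        pushforward φ.toFun (hfun e w ((psiMapP hMt p : Mt.space) : V → ℝ)) w'
      + min ((p.1 : V → ℝ) w) ((p.2 : ℝ)) * (if w' = u then 1 else 0),
        Hval_mem hDM hbD hw hMt φ.map_faces hu hustarD p⟩, ?_⟩, ?_, ?_⟩
    · -- continuity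
      apply Continuous.subtype_mk
      apply continuous_pi
      intro w'
      exact (Hterm_continuous hDM hbD hw hMt φ.toFun w').add (hmin.mul continuous_const)
    · -- endpoint 0
      intro y
      have hmin0 : min ((y : V → ℝ) w) (((0 : unitInterval)) : ℝ) = 0 := by
        rw [show (((0 : unitInterval)) : ℝ) = 0 by norm_num]
        exact min_eq_right (Mt.coord_nonneg y.2 w)
      have hmlt : min (((y, (0 : unitInterval)).1 : V → ℝ) w)
          (((y, (0 : unitInterval)).2 : ℝ)) < 1 := by
        rw [show (((y, (0 : unitInterval)).1 : V → ℝ) w) = ((y : V → ℝ) w) from rfl]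
        rw [show (((y, (0 : unitInterval)).2 : ℝ)) = (((0 : unitInterval)) : ℝ) from rfl]
        rw [hmin0]
        norm_num
      have hval := psiMapP_val hDM hbD hw hMt (p := (y, 0)) hmlt
      have hpsi0 : psif w ((y : V → ℝ)) (((0 : unitInterval)) : ℝ) = (y : V → ℝ) :=
        psif_m_zero hmin0
      funext w'
      show (1 - min ((y : V → ℝ) w) (((0 : unitInterval)) : ℝ)) *
          pushforward φ.toFun (hfun e w ((psiMapP hMt (y, 0) : Mt.space) : V → ℝ)) w'
        + min ((y : V → ℝ) w) (((0 : unitInterval)) : ℝ) * (if w' = u then 1 else 0)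
        = pushforward φ.toFun ((h y : M.space) : V → ℝ) w'
      rw [hmin0, hval, hpsi0]
      have hcoe : ((h y : M.space) : V → ℝ) = hfun e w ((y : V → ℝ)) := rfl
      rw [hcoe]
      ring
    · -- endpoint 1
      intro y
      funext w'
      show (1 - min ((y : V → ℝ) w) (((1 : unitInterval)) : ℝ)) *
          pushforward φ.toFun (hfun e w ((psiMapP hMt (y, 1) : Mt.space) : V → ℝ)) w'
        + min ((y : V → ℝ) w) (((1 : unitInterval)) : ℝ) * (if w' = u then 1 else 0)
        = pushforward φt.toFun ((y : Mt.space) : V → ℝ) w'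
      have hφtf : φt.toFun = phit φ.toFun w u := rfl
      rcases eq_or_ne ((y : V → ℝ) w) 1 with h1 | h1
      · have hmin1 : min ((y : V → ℝ) w) (((1 : unitInterval)) : ℝ) = 1 := by
          rw [show (((1 : unitInterval)) : ℝ) = 1 by norm_num, h1, min_self]
        have hyd : (y : V → ℝ) = dwf w := SComplex.apex_eq hMt y.2 h1
        rw [hmin1, hφtf, hyd, pushforward_phit_apex]
        show _ = if w' = u then (1:ℝ) else 0
        ring
      · have hmin1 : min ((y : V → ℝ) w) (((1 : unitInterval)) : ℝ) = (y : V → ℝ) w := by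
          rw [show (((1 : unitInterval)) : ℝ) = 1 by norm_num]
          exact min_eq_left (Mt.coord_le_one y.2 w)
        have hmlt : min (((y, (1 : unitInterval)).1 : V → ℝ) w)
            (((y, (1 : unitInterval)).2 : ℝ)) < 1 := by
          rw [show (((y, (1 : unitInterval)).1 : V → ℝ) w) = ((y : V → ℝ) w) from rfl]
          rw [show (((y, (1 : unitInterval)).2 : ℝ)) = (((1 : unitInterval)) : ℝ) from rfl]
          rw [hmin1]
          exact lt_of_le_of_ne (Mt.coord_le_one y.2 w) h1
        have hval := psiMapP_val hDM hbD hw hMt (p := (y, 1)) hmlt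
        have hpsieq : psif w ((y : V → ℝ)) (((1 : unitInterval)) : ℝ) = zf w ((y : V → ℝ)) :=
          psif_eq_zf hmin1
        have hzfw : zf w ((y : V → ℝ)) w = 0 := by unfold zf; rw [if_pos rfl]
        have hfuneq : hfun e w (zf w ((y : V → ℝ))) = zf w ((y : V → ℝ)) := if_pos hzfw
        have hcone := pushforward_phit_cone hDM hbD hw hMt
          (f := φ.toFun) (u := u) y.2 h1
        rw [hφtf, hcone, hval, hpsieq, hfuneq, hmin1]
  refine ⟨h, φt, hH, ?_⟩
  constructor
  · rintro ⟨c, hc⟩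
    have h2 := hc.precomp h.continuous
    exact ⟨c, hH.symm.trans h2⟩
  · rintro ⟨c, hc⟩
    have h2 := (hH.trans hc).precomp h.symm.continuous
    have heq : ((fun y : Mt.space => pushforward φ.toFun ((h y : M.space) : V → ℝ))
        ∘ h.symm) = fun x : M.space => pushforward φ.toFun ((x : M.space) : V → ℝ) := by
      funext x
      show pushforward φ.toFun ((h (h.symm x) : M.space) : V → ℝ) = _
      rw [Homeomorph.apply_symm_apply]
    rw [heq] at h2
    exact ⟨c, h2⟩
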